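/- arXiv:2507.22200 — 6 statements merged into one kernel-verified Lean document; each statement's English description precedes it below -/
import Mathlib

section
/- Let H be a real symmetric n×n matrix strictly supported on the connected graph G, let λ ∈ ℝ and ψ ∈ ℝ^V satisfy Hψ = λψ with dim ker(H − λI) = 1 and ψ_r ≠ 0 for every vertex r, and let C be a frame for the cycle space Z. Then the β×β weighted cycle intersection matrix C^⊤ Φ^{-1} C is nondegenerate: n_0(C^⊤ Φ^{-1} C) = 0, i.e., C^⊤ Φ^{-1} C is invertible. -/
open Matrix

/-- A finite simple graph with a chosen orientation of each edge:
`E` is the edge index type, each edge `e` goes from `src e` to `tgt e`. -/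
structure OrientedGraph (V E : Type*) where
  src : E → V
  tgt : E → V
  loopless : ∀ e, src e ≠ tgt e
  edgeInj : ∀ e f, (src e = src f ∧ tgt e = tgt f) ∨ (src e = tgt f ∧ tgt e = src f) → e = f

/-- The underlying simple graph: `r` and `s` are adjacent iff some oriented edge joins them. -/
def OrientedGraph.toSimpleGraph {V E : Type*} (G : OrientedGraph V E) : SimpleGraph V where
  Adj r s := ∃ e, (G.src e = r ∧ G.tgt e = s) ∨ (G.src e = s ∧ G.tgt e = r)
  symm := by
    constructor
    intro r s h
    obtain ⟨e, h⟩ := h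
    exact ⟨e, h.symm⟩
  loopless := by
    constructor
    intro r h
    obtain ⟨e, h⟩ := h
    rcases h with ⟨h1, h2⟩ | ⟨h1, h2⟩ <;> exact G.loopless e (h1.trans h2.symm)

/-- `H` is strictly supported on `G`: off-diagonal entries are nonzero exactly on edges. -/
def OrientedGraph.StrictSupport {V E : Type*} (G : OrientedGraph V E)
    (H : Matrix V V ℝ) : Prop :=
  ∀ r s, r ≠ s → (H r s ≠ 0 ↔ G.toSimpleGraph.Adj r s)

/-- `H` is supported on `G`: off-diagonal nonzero entries occur only on edges. -/
def OrientedGraph.Support {V E : Type*} (G : OrientedGraph V E)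
    (H : Matrix V V ℝ) : Prop :=
  ∀ r s, r ≠ s → H r s ≠ 0 → G.toSimpleGraph.Adj r s

/-- The coboundary map `d : ℝ^V → ℝ^E`, `(dθ)_{(r→s)} = θ_s - θ_r`, as an `E × V` matrix. -/
def OrientedGraph.cob {V E : Type*} [DecidableEq V] (G : OrientedGraph V E) :
    Matrix E V ℝ :=
  Matrix.of fun e v => (if G.tgt e = v then (1 : ℝ) else 0) - (if G.src e = v then (1 : ℝ) else 0)

/-- The cycle space `Z = ker dᵀ ⊆ ℝ^E`. -/
noncomputable def OrientedGraph.cycleSpace {V E : Type*} [Fintype V] [Fintype E]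
    [DecidableEq V] (G : OrientedGraph V E) : Submodule ℝ (E → ℝ) :=
  LinearMap.ker (G.cob)ᵀ.mulVecLin

/-- The diagonal matrix `Φ` on `ℝ^E` with entries `Φ_{(r→s)} = -ψ_r H_{rs} ψ_s`. -/
noncomputable def PhiMat {V E : Type*} [DecidableEq E] (G : OrientedGraph V E)
    (H : Matrix V V ℝ) (ψ : V → ℝ) : Matrix E E ℝ :=
  Matrix.diagonal fun e => -(ψ (G.src e) * H (G.src e) (G.tgt e) * ψ (G.tgt e))

/-- The nodal count `ν(ψ,H) = #{(r→s) ∈ E : ψ_r H_{rs} ψ_s > 0}`. -/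
noncomputable def nodalCount {V E : Type*} (G : OrientedGraph V E)
    (H : Matrix V V ℝ) (ψ : V → ℝ) : ℕ :=
  Nat.card {e : E // 0 < ψ (G.src e) * H (G.src e) (G.tgt e) * ψ (G.tgt e)}

/-- `C` is a frame for the cycle space: its columns form a basis of `Z`. -/
def IsFrame {V E : Type*} [Fintype V] [Fintype E] [DecidableEq V]
    (G : OrientedGraph V E) {β : ℕ} (C : Matrix E (Fin β) ℝ) : Prop :=
  LinearMap.ker C.mulVecLin = ⊥ ∧ LinearMap.range C.mulVecLin = G.cycleSpace

/-- `n₋(A)`: the number of negative eigenvalues (with multiplicity) of a hermitian matrix. -/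
noncomputable def negEig {𝕜 : Type*} [RCLike 𝕜] {m : Type*} [Fintype m] [DecidableEq m]
    (A : Matrix m m 𝕜) : ℕ :=
  if h : A.IsHermitian then Nat.card {i // h.eigenvalues i < 0} else 0

/-- `n₊(A)`: the number of positive eigenvalues (with multiplicity) of a hermitian matrix. -/
noncomputable def posEig {𝕜 : Type*} [RCLike 𝕜] {m : Type*} [Fintype m] [DecidableEq m]
    (A : Matrix m m 𝕜) : ℕ :=
  if h : A.IsHermitian then Nat.card {i // 0 < h.eigenvalues i} else 0

/-- `n₀(A)`: the number of zero eigenvalues of a hermitian matrix, i.e. `dim ker A`. -/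
noncomputable def zeroEig {𝕜 : Type*} [RCLike 𝕜] {m : Type*} [Fintype m] [DecidableEq m]
    (A : Matrix m m 𝕜) : ℕ :=
  Module.finrank 𝕜 (LinearMap.ker A.mulVecLin)

/-- `n₋([A]_W)`: the Morse index (number of negative eigenvalues) of the compression of
a hermitian matrix `A` to the subspace `W`, i.e. the maximal dimension of a subspace of `W`
on which the hermitian form of `A` is negative definite. -/
noncomputable def negIndexOn {𝕜 : Type*} [RCLike 𝕜] {m : Type*} [Fintype m]
    (A : Matrix m m 𝕜) (W : Submodule 𝕜 (m → 𝕜)) : ℕ :=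
  sSup {k : ℕ | ∃ U : Submodule 𝕜 (m → 𝕜), U ≤ W ∧ Module.finrank 𝕜 U = k ∧
    ∀ x ∈ U, x ≠ 0 → RCLike.re (star x ⬝ᵥ A.mulVec x) < 0}

/-- `n₊([A]_W)`: the number of positive eigenvalues of the compression of a hermitian
matrix `A` to the subspace `W`. -/
noncomputable def posIndexOn {𝕜 : Type*} [RCLike 𝕜] {m : Type*} [Fintype m]
    (A : Matrix m m 𝕜) (W : Submodule 𝕜 (m → 𝕜)) : ℕ :=
  sSup {k : ℕ | ∃ U : Submodule 𝕜 (m → 𝕜), U ≤ W ∧ Module.finrank 𝕜 U = k ∧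
    ∀ x ∈ U, x ≠ 0 → 0 < RCLike.re (star x ⬝ᵥ A.mulVec x)}

/-- The linear functional `x ↦ v ⬝ᵥ x`. -/
noncomputable def dotLeft {𝕜 : Type*} [RCLike 𝕜] {m : Type*} [Fintype m] (v : m → 𝕜) :
    (m → 𝕜) →ₗ[𝕜] 𝕜 where
  toFun x := v ⬝ᵥ x
  map_add' x y := by simp [dotProduct_add]
  map_smul' c x := by simp [dotProduct_smul]

/-- `n₀([A]_W)`: the dimension of the kernel of the compression of `A` to `W`,
i.e. of `{x ∈ W : Ax ⊥ W}`. -/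
noncomputable def zeroIndexOn {𝕜 : Type*} [RCLike 𝕜] {m : Type*} [Fintype m]
    (A : Matrix m m 𝕜) (W : Submodule 𝕜 (m → 𝕜)) : ℕ :=
  Module.finrank 𝕜
    ↥(W ⊓ ⨅ y : W, LinearMap.ker ((dotLeft (star (y : m → 𝕜))).comp A.mulVecLin))

/-- Extension of `α ∈ ℝ^E` to an antisymmetric function on pairs of vertices:
`α_{rs} = α_e` if `e = (r→s) ∈ E`, `α_{rs} = -α_e` if `e = (s→r) ∈ E`, and `0` otherwise. -/
noncomputable def alphaExt {V E : Type*} [Fintype E] [DecidableEq V]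
    (G : OrientedGraph V E) (α : E → ℝ) (r s : V) : ℝ :=
  ∑ e : E, ((if G.src e = r ∧ G.tgt e = s then α e else 0) -
            (if G.src e = s ∧ G.tgt e = r then α e else 0))

/-- The phase-perturbed matrix `H_α` with `(H_α)_{rs} = e^{iα_{rs}} H_{rs}` for `r ≠ s`. -/
noncomputable def phaseMat {V E : Type*} [Fintype E] [DecidableEq V]
    (G : OrientedGraph V E) (H : Matrix V V ℝ) (α : E → ℝ) : Matrix V V ℂ :=
  Matrix.of fun r s =>
    if r = s then (H r r : ℂ)
    else Complex.exp (Complex.I * (alphaExt G α r s : ℂ)) * (H r s : ℂ)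

lemma dot_ker_transpose_mem_range {E V : Type*} [Fintype E] [Fintype V]
    (A : Matrix E V ℝ) (y : E → ℝ)
    (hy : ∀ z : E → ℝ, Aᵀ.mulVec z = 0 → y ⬝ᵥ z = 0) :
    ∃ θ : V → ℝ, A.mulVec θ = y := by
  classical
  set Z := LinearMap.ker Aᵀ.mulVecLin with hZ
  set W := LinearMap.range A.mulVecLin with hW
  let ε : EuclideanSpace ℝ E ≃ₗ[ℝ] (E → ℝ) := WithLp.linearEquiv 2 ℝ (E → ℝ)
  set Z' : Submodule ℝ (EuclideanSpace ℝ E) := Z.comap ε.toLinearMap with hZ'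
  set W' : Submodule ℝ (EuclideanSpace ℝ E) := W.comap ε.toLinearMap with hW'
  have hinner : ∀ a b : EuclideanSpace ℝ E, (inner ℝ a b : ℝ) = (ε a) ⬝ᵥ (ε b) := by
    intro a b
    simp [PiLp.inner_apply, dotProduct, RCLike.inner_apply, ε, WithLp.linearEquiv, mul_comm]
  have hWZ : W' ≤ Z'ᗮ := by
    rintro w hw
    rw [Submodule.mem_orthogonal]
    intro z hz
    obtain ⟨θ, hθ⟩ := hw
    have hθ' : (ε w : E → ℝ) = A.mulVec θ := hθ.symm
    have hz0 : Aᵀ.mulVec (ε z) = 0 := hz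
    rw [hinner, hθ', Matrix.dotProduct_mulVec, ← Matrix.mulVec_transpose, hz0,
      zero_dotProduct]
  have hfin1 : Module.finrank ℝ W' = Module.finrank ℝ W := by
    rw [hW', Submodule.comap_equiv_eq_map_symm]
    exact LinearEquiv.finrank_map_eq _ _
  have hfin2 : Module.finrank ℝ Z' = Module.finrank ℝ Z := by
    rw [hZ', Submodule.comap_equiv_eq_map_symm]
    exact LinearEquiv.finrank_map_eq _ _
  have e1 : Module.finrank ℝ Z' + Module.finrank ℝ Z'ᗮ = Fintype.card E := by
    rw [Submodule.finrank_add_finrank_orthogonal, finrank_euclideanSpace]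
  have e2 : Module.finrank ℝ W + Module.finrank ℝ Z = Fintype.card E := by
    have := LinearMap.finrank_range_add_finrank_ker (Aᵀ.mulVecLin)
    rw [Module.finrank_pi] at this
    rw [← this, hW, hZ]
    congr 1
    rw [← Matrix.rank, ← Matrix.rank, Matrix.rank_transpose]
  have heq : W' = Z'ᗮ := by
    apply Submodule.eq_of_le_of_finrank_eq hWZ
    omega
  have hmem : ε.symm y ∈ Z'ᗮ := by
    rw [Submodule.mem_orthogonal]
    intro z hz
    have hz0 : Aᵀ.mulVec (ε z) = 0 := hz
    rw [hinner, LinearEquiv.apply_symm_apply, dotProduct_comm]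
    exact hy _ hz0
  rw [← heq] at hmem
  obtain ⟨θ, hθ⟩ := hmem
  exact ⟨θ, by simpa using hθ⟩

lemma edge_sum_eq_vertex_sum {V E : Type*} [Fintype V] [Fintype E] [DecidableEq V]
    (G : OrientedGraph V E) (v : V) (f : V → ℝ)
    (hf : ∀ s, ¬ G.toSimpleGraph.Adj v s → f s = 0) :
    ∑ e : E, ((if G.tgt e = v then f (G.src e) else 0) +
      (if G.src e = v then f (G.tgt e) else 0)) = ∑ s : V, f s := by
  classical
  set S : Finset E := Finset.univ.filter (fun e => G.tgt e = v ∨ G.src e = v) with hS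
  set T : Finset V := Finset.univ.filter (fun s => G.toSimpleGraph.Adj v s) with hT
  have hL : ∑ e : E, ((if G.tgt e = v then f (G.src e) else 0) +
      (if G.src e = v then f (G.tgt e) else 0)) =
      ∑ e ∈ S, (if G.tgt e = v then f (G.src e) else f (G.tgt e)) := by
    rw [← Finset.sum_filter_add_sum_filter_not Finset.univ
      (fun e => G.tgt e = v ∨ G.src e = v)]
    have h2 : ∑ e ∈ Finset.univ.filter (fun e => ¬(G.tgt e = v ∨ G.src e = v)),
        ((if G.tgt e = v then f (G.src e) else 0) +
          (if G.src e = v then f (G.tgt e) else 0)) = 0 := by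
      apply Finset.sum_eq_zero
      intro e he
      simp only [Finset.mem_filter, not_or] at he
      simp [he.2.1, he.2.2]
    rw [h2, add_zero]
    apply Finset.sum_congr rfl
    intro e he
    simp only [hS, Finset.mem_filter] at he
    rcases he.2 with h | h
    · have : G.src e ≠ v := fun hs => G.loopless e (hs.trans h.symm)
      simp [h, this]
    · have : G.tgt e ≠ v := fun hs => G.loopless e (h.trans hs.symm)
      simp [h, this]
  rw [hL]
  have hR : ∑ s : V, f s = ∑ s ∈ T, f s := by
    symm
    apply Finset.sum_subset (Finset.subset_univ T)
    intro s _ hs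
    apply hf
    intro hadj
    exact hs (Finset.mem_filter.mpr ⟨Finset.mem_univ _, hadj⟩)
  rw [hR]
  apply Finset.sum_bij (fun e _ => if G.tgt e = v then G.src e else G.tgt e)
  · intro e he
    simp only [hS, Finset.mem_filter] at he
    simp only [hT, Finset.mem_filter]
    refine ⟨Finset.mem_univ _, ?_⟩
    rcases he.2 with h | h
    · rw [if_pos h]; exact ⟨e, Or.inr ⟨rfl, h⟩⟩
    · have hne : G.tgt e ≠ v := fun hs => G.loopless e (h.trans hs.symm)
      rw [if_neg hne]; exact ⟨e, Or.inl ⟨h, rfl⟩⟩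
  · intro a ha b hb hab
    simp only [hS, Finset.mem_filter] at ha hb
    apply G.edgeInj
    rcases ha.2 with h1 | h1 <;> rcases hb.2 with h2 | h2
    · rw [if_pos h1, if_pos h2] at hab
      exact Or.inl ⟨hab, h1.trans h2.symm⟩
    · have hne : G.tgt b ≠ v := fun hs => G.loopless b (h2.trans hs.symm)
      rw [if_pos h1, if_neg hne] at hab
      exact Or.inr ⟨hab, h1.trans h2.symm⟩
    · have hne : G.tgt a ≠ v := fun hs => G.loopless a (h1.trans hs.symm)
      rw [if_neg hne, if_pos h2] at hab
      exact Or.inr ⟨h1.trans h2.symm, hab.symm ▸ hab ▸ rfl⟩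
    · have hnea : G.tgt a ≠ v := fun hs => G.loopless a (h1.trans hs.symm)
      have hneb : G.tgt b ≠ v := fun hs => G.loopless b (h2.trans hs.symm)
      rw [if_neg hnea, if_neg hneb] at hab
      exact Or.inl ⟨h1.trans h2.symm, hab⟩
  · intro s hs
    simp only [hT, Finset.mem_filter] at hs
    have hsv : s ≠ v := fun h => (G.toSimpleGraph.loopless.irrefl v) (h ▸ hs.2)
    obtain ⟨e, h⟩ := hs.2
    rcases h with ⟨h1, h2⟩ | ⟨h1, h2⟩
    · have hne : G.tgt e ≠ v := fun hh => hsv (h2.symm.trans hh)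
      refine ⟨e, Finset.mem_filter.mpr ⟨Finset.mem_univ _, Or.inr h1⟩, ?_⟩
      rw [if_neg hne, h2]
    · refine ⟨e, Finset.mem_filter.mpr ⟨Finset.mem_univ _, Or.inl h2⟩, ?_⟩
      rw [if_pos h2, h1]
  · intro e he
    exact (apply_ite f _ _ _).symm

/-- the weighted cycle intersection matrix `Cᵀ Φ⁻¹ C` is nondegenerate. -/
theorem cycle_intersection_form_nondegenerate
    {V E : Type*} [Fintype V] [Fintype E] [DecidableEq V] [DecidableEq E]
    (G : OrientedGraph V E) (hconn : G.toSimpleGraph.Connected)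
    (H : Matrix V V ℝ) (hsymm : H.IsSymm) (hsupp : G.StrictSupport H)
    (lam : ℝ) (ψ : V → ℝ) (heig : H.mulVec ψ = lam • ψ)
    (hker : Module.finrank ℝ (LinearMap.ker (H - lam • (1 : Matrix V V ℝ)).mulVecLin) = 1)
    (hψ : ∀ r, ψ r ≠ 0)
    {β : ℕ} (C : Matrix E (Fin β) ℝ) (hC : IsFrame G C) :
    zeroEig (Cᵀ * (PhiMat G H ψ)⁻¹ * C) = 0 ∧
      IsUnit (Cᵀ * (PhiMat G H ψ)⁻¹ * C).det := by
  classical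
  obtain ⟨hCker, hCrange⟩ := hC
  set Φe : E → ℝ := fun e => -(ψ (G.src e) * H (G.src e) (G.tgt e) * ψ (G.tgt e)) with hΦe
  have hΦne : ∀ e, Φe e ≠ 0 := by
    intro e
    have hadj : G.toSimpleGraph.Adj (G.src e) (G.tgt e) := ⟨e, Or.inl ⟨rfl, rfl⟩⟩
    have hH : H (G.src e) (G.tgt e) ≠ 0 := (hsupp _ _ (G.loopless e)).mpr hadj
    simp only [hΦe, neg_ne_zero]
    exact mul_ne_zero (mul_ne_zero (hψ _) hH) (hψ _)
  have hΦinv : (PhiMat G H ψ)⁻¹ = Matrix.diagonal (fun e => (Φe e)⁻¹) := by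
    apply Matrix.inv_eq_right_inv
    rw [PhiMat, Matrix.diagonal_mul_diagonal]
    have h1 : (fun i => -(ψ (G.src i) * H (G.src i) (G.tgt i) * ψ (G.tgt i)) * (Φe i)⁻¹) =
        fun _ : E => (1:ℝ) := by
      funext e
      exact mul_inv_cancel₀ (hΦne e)
    rw [h1, Matrix.diagonal_one]
  have hkerM : LinearMap.ker (Cᵀ * (PhiMat G H ψ)⁻¹ * C).mulVecLin = ⊥ := by
    rw [LinearMap.ker_eq_bot']
    intro x hx
    have hx0 : Cᵀ.mulVec ((PhiMat G H ψ)⁻¹.mulVec (C.mulVec x)) = 0 := by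
      have hx' : (Cᵀ * (PhiMat G H ψ)⁻¹ * C).mulVec x = 0 := hx
      rwa [← Matrix.mulVec_mulVec, ← Matrix.mulVec_mulVec] at hx'
    set γ : E → ℝ := C.mulVec x with hγ
    set w : E → ℝ := (PhiMat G H ψ)⁻¹.mulVec γ with hw
    have hwe : ∀ e, w e = (Φe e)⁻¹ * γ e := by
      intro e; rw [hw, hΦinv, Matrix.mulVec_diagonal]
    have hwZ : ∀ z : E → ℝ, (G.cob)ᵀ.mulVec z = 0 → w ⬝ᵥ z = 0 := by
      intro z hz
      have hzZ : z ∈ G.cycleSpace := hz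
      rw [← hCrange] at hzZ
      obtain ⟨u, hu⟩ := hzZ
      have hu' : C.mulVec u = z := hu
      rw [← hu', Matrix.dotProduct_mulVec, ← Matrix.mulVec_transpose, hx0,
        zero_dotProduct]
    obtain ⟨θ, hθ⟩ := dot_ker_transpose_mem_range G.cob w hwZ
    have hwθ : ∀ e, w e = θ (G.tgt e) - θ (G.src e) := by
      intro e
      rw [← hθ]
      simp [OrientedGraph.cob, Matrix.mulVec, dotProduct, sub_mul, ite_mul, one_mul,
        zero_mul, Finset.sum_sub_distrib]
    have hγe : ∀ e, γ e = Φe e * (θ (G.tgt e) - θ (G.src e)) := by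
      intro e
      have h1 : (Φe e)⁻¹ * γ e = θ (G.tgt e) - θ (G.src e) := by
        rw [← hwe e, hwθ e]
      rw [← h1, ← mul_assoc, mul_inv_cancel₀ (hΦne e), one_mul]
    have hγZ : (G.cob)ᵀ.mulVec γ = 0 := by
      have : γ ∈ G.cycleSpace := by
        rw [← hCrange]; exact ⟨x, rfl⟩
      exact this
    have hvert : ∀ v, ∑ e : E, ((if G.tgt e = v then (1:ℝ) else 0) -
        (if G.src e = v then (1:ℝ) else 0)) * γ e = 0 := by
      intro v
      have := congrFun hγZ v
      simpa [Matrix.mulVec, dotProduct, Matrix.transpose_apply, OrientedGraph.cob] using this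
    set φ : V → ℝ := fun r => ψ r * θ r with hφdef
    have hφker : (H - lam • (1 : Matrix V V ℝ)).mulVec φ = 0 := by
      have hmain : ∀ v, ∑ s : V, H v s * φ s = lam * φ v := by
        intro v
        set f : V → ℝ := fun s => -(ψ s * H s v * ψ v) * (θ v - θ s) with hfdef
        have hterm : ∑ e : E, ((if G.tgt e = v then f (G.src e) else 0) +
            (if G.src e = v then f (G.tgt e) else 0)) = 0 := by
          have hcong : ∑ e : E, ((if G.tgt e = v then f (G.src e) else 0) +
              (if G.src e = v then f (G.tgt e) else 0)) =
              ∑ e : E, ((if G.tgt e = v then (1:ℝ) else 0) -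
                (if G.src e = v then (1:ℝ) else 0)) * γ e := by
            apply Finset.sum_congr rfl
            intro e _
            rw [hγe e]
            by_cases h1 : G.tgt e = v
            · have h2 : G.src e ≠ v := fun hs => G.loopless e (hs.trans h1.symm)
              rw [if_pos h1, if_neg h2, if_pos h1, if_neg h2]
              simp only [hfdef, hΦe, h1]
              ring
            · by_cases h2 : G.src e = v
              · rw [if_neg h1, if_pos h2, if_neg h1, if_pos h2]
                simp only [hfdef, hΦe, h2]
                rw [hsymm.apply v (G.tgt e)]
                ring
              · rw [if_neg h1, if_neg h2, if_neg h1, if_neg h2]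
                ring
          rw [hcong]
          exact hvert v
        have hf0 : ∀ s, ¬ G.toSimpleGraph.Adj v s → f s = 0 := by
          intro s hs
          by_cases hsv : s = v
          · rw [hfdef]; simp [hsv]
          · have : H s v = 0 := by
              by_contra hH
              exact hs (((hsupp s v hsv).mp hH).symm)
            rw [hfdef]; simp [this]
        have hsum0 : ∑ s : V, f s = 0 := by
          rw [← edge_sum_eq_vertex_sum G v f hf0, hterm]
        have hps : ψ v * (∑ s : V, H v s * ψ s * (θ s - θ v)) = 0 := by
          rw [Finset.mul_sum, ← hsum0]
          apply Finset.sum_congr rfl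
          intro s _
          simp only [hfdef]
          rw [hsymm.apply v s]
          ring
        have hs0 : ∑ s : V, H v s * ψ s * (θ s - θ v) = 0 :=
          (mul_eq_zero.mp hps).resolve_left (hψ v)
        have e3 : ∑ s : V, H v s * ψ s * (θ s - θ v) =
            (∑ s : V, H v s * φ s) - θ v * (∑ s : V, H v s * ψ s) := by
          rw [Finset.mul_sum, ← Finset.sum_sub_distrib]
          apply Finset.sum_congr rfl
          intro s _
          rw [hφdef]
          ring
        have e4 : (∑ s : V, H v s * ψ s) = lam * ψ v := by
          have := congrFun heig v
          simpa [Matrix.mulVec, dotProduct, smul_eq_mul] using this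
        rw [e3, e4] at hs0
        have : ∑ s : V, H v s * φ s = θ v * (lam * ψ v) := by linarith
        rw [this, hφdef]
        ring
      funext v
      rw [Matrix.sub_mulVec, Matrix.smul_mulVec, Matrix.one_mulVec]
      have : H.mulVec φ v = lam * φ v := by
        rw [Matrix.mulVec, dotProduct]
        exact hmain v
      simp [this]
    have hψker : (H - lam • (1 : Matrix V V ℝ)).mulVec ψ = 0 := by
      rw [Matrix.sub_mulVec, Matrix.smul_mulVec, Matrix.one_mulVec, heig, sub_self]
    have hVne : Nonempty V := hconn.nonempty
    have hψ0 : ψ ≠ 0 := by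
      intro h
      exact hψ (Classical.arbitrary V) (by rw [h]; rfl)
    have hspan : (Submodule.span ℝ {ψ}) =
        LinearMap.ker (H - lam • (1 : Matrix V V ℝ)).mulVecLin := by
      apply Submodule.eq_of_le_of_finrank_eq
      · rw [Submodule.span_singleton_le_iff_mem]
        exact hψker
      · rw [hker, finrank_span_singleton hψ0]
    have hφmem : φ ∈ Submodule.span ℝ {ψ} := by
      rw [hspan]
      exact hφker
    obtain ⟨c, hc⟩ := Submodule.mem_span_singleton.mp hφmem
    have hθc : ∀ r, θ r = c := by
      intro r
      have h1 : c * ψ r = ψ r * θ r := by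
        have := congrFun hc r
        simpa [smul_eq_mul, hφdef] using this
      have h2 : ψ r * θ r = ψ r * c := by rw [← h1]; ring
      exact mul_left_cancel₀ (hψ r) h2
    have hγ0 : γ = 0 := by
      funext e
      rw [hγe e, hθc, hθc, sub_self, mul_zero]
      rfl
    have : x ∈ LinearMap.ker C.mulVecLin := by
      rw [LinearMap.mem_ker, Matrix.mulVecLin_apply, ← hγ, hγ0]
    rw [hCker] at this
    simpa using this
  constructor
  · rw [zeroEig, hkerM, finrank_bot]
  · have hinj : Function.Injective (Cᵀ * (PhiMat G H ψ)⁻¹ * C).mulVec := by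
      have := LinearMap.ker_eq_bot.mp hkerM
      rwa [Matrix.coe_mulVecLin] at this
    exact (Matrix.isUnit_iff_isUnit_det _).mp (Matrix.mulVec_injective_iff_isUnit.mp hinj)
end

section
/- Let H be a real symmetric n×n matrix strictly supported on the connected graph G, let λ ∈ ℝ and ψ ∈ ℝ^V satisfy Hψ = λψ with dim ker(H − λI) = 1 and ψ_r ≠ 0 for every vertex r, and let C be a frame for the cycle space Z. Consider the symmetric block matrix M = [[Φ, C],[C^⊤, 0_β]] of size (|E|+β)×(|E|+β). Then n_-(M) = n_-(H − λI) + β. -/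
open Matrix

namespace NodalAux
set_option linter.unusedSectionVars false

section Spectral
variable {m : Type*} [Fintype m] [DecidableEq m] {A : Matrix m m ℝ}

lemma sum_dotProduct' {ι : Type*} (s : Finset ι) (f : ι → m → ℝ) (v : m → ℝ) :
    (∑ i ∈ s, f i) ⬝ᵥ v = ∑ i ∈ s, f i ⬝ᵥ v := by
  simp only [dotProduct, Finset.sum_apply, Finset.sum_mul]
  exact Finset.sum_comm

lemma dotProduct_sum' {ι : Type*} (s : Finset ι) (v : m → ℝ) (f : ι → m → ℝ) :
    v ⬝ᵥ (∑ i ∈ s, f i) = ∑ i ∈ s, v ⬝ᵥ f i := by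
  simp only [dotProduct, Finset.sum_apply, Finset.mul_sum]
  exact Finset.sum_comm

lemma dot_eig (hA : A.IsHermitian) (i j : m) :
    ⇑(hA.eigenvectorBasis i) ⬝ᵥ (A *ᵥ ⇑(hA.eigenvectorBasis j)) =
      if i = j then hA.eigenvalues j else 0 := by
  rw [hA.mulVec_eigenvectorBasis]
  have horth := hA.eigenvectorBasis.orthonormal
  rw [orthonormal_iff_ite] at horth
  have h2 : ⇑(hA.eigenvectorBasis i) ⬝ᵥ ⇑(hA.eigenvectorBasis j)
      = (if i = j then (1:ℝ) else 0) := by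
    rw [← horth i j]
    simp [dotProduct, PiLp.inner_apply, mul_comm]
  rw [dotProduct_smul, h2]
  by_cases h : i = j <;> simp [h]

lemma eig_subspace (hA : A.IsHermitian) (P : m → Prop) [DecidablePred P] :
    ∃ W : Submodule ℝ (m → ℝ), Module.finrank ℝ W = Fintype.card {i // P i} ∧
      ∀ x ∈ W, ∃ c : {i // P i} → ℝ,
        x = ∑ i, c i • ⇑(hA.eigenvectorBasis i.1) ∧
        x ⬝ᵥ (A *ᵥ x) = ∑ i, hA.eigenvalues i.1 * (c i)^2 := by
  set v : {i // P i} → (m → ℝ) := fun i => ⇑(hA.eigenvectorBasis i.1) with hv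
  have hli : LinearIndependent ℝ v := by
    have h1 : LinearIndependent ℝ (fun j : m => (hA.eigenvectorBasis j : EuclideanSpace ℝ m)) :=
      hA.eigenvectorBasis.orthonormal.linearIndependent
    exact (h1.map' (WithLp.linearEquiv 2 ℝ (m → ℝ)).toLinearMap
      (WithLp.linearEquiv 2 ℝ (m → ℝ)).ker).comp Subtype.val Subtype.val_injective
  refine ⟨Submodule.span ℝ (Set.range v), ?_, ?_⟩
  · rw [finrank_span_eq_card hli]
  · intro x hx
    obtain ⟨c, hc⟩ := Submodule.mem_span_range_iff_exists_fun ℝ |>.mp hx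
    refine ⟨c, hc.symm, ?_⟩
    subst hc
    have hmv : A *ᵥ (∑ i, c i • v i) = ∑ j, c j • (A *ᵥ v j) := by
      rw [← A.mulVecLin_apply, map_sum]
      simp [Matrix.mulVecLin_apply]
    rw [hmv, sum_dotProduct']
    have hterm : ∀ i : {i // P i},
        (c i • v i) ⬝ᵥ (∑ j, c j • (A *ᵥ v j)) = hA.eigenvalues i.1 * (c i)^2 := by
      intro i
      rw [dotProduct_sum']
      have : ∀ j : {i // P i}, (c i • v i) ⬝ᵥ (c j • (A *ᵥ v j))
          = c i * c j * (if i = j then hA.eigenvalues j.1 else 0) := by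
        intro j
        rw [smul_dotProduct, dotProduct_smul]
        have h3 := dot_eig hA i.1 j.1
        rw [hv]
        simp only []
        rw [h3]
        have hite : (if (i:m) = (j:m) then hA.eigenvalues j.1 else 0)
            = (if i = j then hA.eigenvalues j.1 else 0) := by
          simp [Subtype.ext_iff]
        rw [hite]; simp [smul_eq_mul]; ring
      simp only [this, mul_ite, mul_zero]
      rw [Finset.sum_ite_eq Finset.univ i (fun j => c i * c j * hA.eigenvalues j.1)]
      simp; ring
    rw [Finset.sum_congr rfl (fun i _ => hterm i)]

lemma negdef_le (hA : A.IsHermitian) (U : Submodule ℝ (m → ℝ))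
    (hU : ∀ x ∈ U, x ≠ 0 → x ⬝ᵥ (A *ᵥ x) < 0) :
    Module.finrank ℝ U ≤ Fintype.card {i // hA.eigenvalues i < 0} := by
  by_contra hlt
  push_neg at hlt
  obtain ⟨W, hWrank, hWprop⟩ := eig_subspace hA (fun i => ¬ hA.eigenvalues i < 0)
  have hWnonneg : ∀ x ∈ W, 0 ≤ x ⬝ᵥ (A *ᵥ x) := by
    intro x hx
    obtain ⟨c, -, hform⟩ := hWprop x hx
    rw [hform]
    refine Finset.sum_nonneg fun i _ => ?_
    have h2 := i.2
    push_neg at h2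
    exact mul_nonneg h2 (sq_nonneg _)
  have hcompl : Fintype.card {i // ¬ hA.eigenvalues i < 0}
      = Fintype.card m - Fintype.card {i // hA.eigenvalues i < 0} :=
    Fintype.card_subtype_compl _
  have hsum := Submodule.finrank_sup_add_finrank_inf_eq U W
  have hle : Module.finrank ℝ ↥(U ⊔ W) ≤ Fintype.card m := by
    simpa [Module.finrank_fintype_fun_eq_card] using Submodule.finrank_le (U ⊔ W)
  have hcard : Fintype.card {i // hA.eigenvalues i < 0} ≤ Fintype.card m :=
    Fintype.card_subtype_le _
  have hpos : 0 < Module.finrank ℝ ↥(U ⊓ W) := by omega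
  have hne : U ⊓ W ≠ ⊥ := by
    intro h
    rw [h, finrank_bot] at hpos
    omega
  obtain ⟨x, hxmem, hxne⟩ := Submodule.exists_mem_ne_zero_of_ne_bot hne
  exact absurd (hWnonneg x hxmem.2) (not_le.mpr (hU x hxmem.1 hxne))

lemma posdef_le (hA : A.IsHermitian) (U : Submodule ℝ (m → ℝ))
    (hU : ∀ x ∈ U, x ≠ 0 → 0 < x ⬝ᵥ (A *ᵥ x)) :
    Module.finrank ℝ U ≤ Fintype.card {i // 0 < hA.eigenvalues i} := by
  by_contra hlt
  push_neg at hlt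
  obtain ⟨W, hWrank, hWprop⟩ := eig_subspace hA (fun i => ¬ 0 < hA.eigenvalues i)
  have hWnonpos : ∀ x ∈ W, x ⬝ᵥ (A *ᵥ x) ≤ 0 := by
    intro x hx
    obtain ⟨c, -, hform⟩ := hWprop x hx
    rw [hform]
    refine Finset.sum_nonpos fun i _ => ?_
    have h2 := i.2
    push_neg at h2
    exact mul_nonpos_of_nonpos_of_nonneg h2 (sq_nonneg _)
  have hcompl : Fintype.card {i // ¬ 0 < hA.eigenvalues i}
      = Fintype.card m - Fintype.card {i // 0 < hA.eigenvalues i} :=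
    Fintype.card_subtype_compl _
  have hsum := Submodule.finrank_sup_add_finrank_inf_eq U W
  have hle : Module.finrank ℝ ↥(U ⊔ W) ≤ Fintype.card m := by
    simpa [Module.finrank_fintype_fun_eq_card] using Submodule.finrank_le (U ⊔ W)
  have hcard : Fintype.card {i // 0 < hA.eigenvalues i} ≤ Fintype.card m :=
    Fintype.card_subtype_le _
  have hpos : 0 < Module.finrank ℝ ↥(U ⊓ W) := by omega
  have hne : U ⊓ W ≠ ⊥ := by
    intro h
    rw [h, finrank_bot] at hpos
    omega
  obtain ⟨x, hxmem, hxne⟩ := Submodule.exists_mem_ne_zero_of_ne_bot hne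
  exact absurd (hWnonpos x hxmem.2) (not_le.mpr (hU x hxmem.1 hxne))

lemma card_neg_add_pos (hA : A.IsHermitian) :
    Fintype.card {i // hA.eigenvalues i < 0} + Fintype.card {i // 0 < hA.eigenvalues i}
      = Fintype.card {i // hA.eigenvalues i ≠ 0} := by
  classical
  rw [Fintype.card_subtype, Fintype.card_subtype, Fintype.card_subtype]
  rw [← Finset.card_union_of_disjoint]
  · congr 1
    ext i
    simp only [Finset.mem_union, Finset.mem_filter, Finset.mem_univ, true_and]
    constructor
    · rintro (h | h) <;> [exact h.ne; exact h.ne']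
    · intro h
      rcases lt_or_gt_of_ne h with h | h
      · exact Or.inl h
      · exact Or.inr h
  · rw [Finset.disjoint_filter]
    intro i _ h1
    simp only [not_lt]
    exact le_of_lt h1

lemma sign_card_le (hA : A.IsHermitian) :
    Fintype.card {i // hA.eigenvalues i < 0} + Fintype.card {i // 0 < hA.eigenvalues i}
      ≤ Fintype.card m := by
  rw [card_neg_add_pos hA]
  exact Fintype.card_subtype_le _

lemma sign_partition (hA : A.IsHermitian) :
    Fintype.card {i // hA.eigenvalues i < 0} + Fintype.card {i // 0 < hA.eigenvalues i}
      + Module.finrank ℝ (LinearMap.ker A.mulVecLin) = Fintype.card m := by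
  classical
  have h1 : A.rank = Fintype.card {i // hA.eigenvalues i ≠ 0} := hA.rank_eq_card_non_zero_eigs
  have h2 : A.rank + Module.finrank ℝ (LinearMap.ker A.mulVecLin) = Fintype.card m := by
    have h3 := LinearMap.finrank_range_add_finrank_ker A.mulVecLin
    rw [Module.finrank_fintype_fun_eq_card] at h3
    rw [Matrix.rank]
    exact h3
  have h4 : Fintype.card {i // hA.eigenvalues i ≠ 0}
      = Fintype.card {i // hA.eigenvalues i < 0} + Fintype.card {i // 0 < hA.eigenvalues i} :=
    (card_neg_add_pos hA).symm
  omega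

end Spectral


variable {V E : Type*} [Fintype V] [Fintype E] [DecidableEq V] [DecidableEq E]

lemma cob_apply (G : OrientedGraph V E) (θ : V → ℝ) (e : E) :
    (G.cob *ᵥ θ) e = θ (G.tgt e) - θ (G.src e) := by
  simp only [OrientedGraph.cob, Matrix.mulVec, dotProduct, Matrix.of_apply, sub_mul,
    ite_mul, one_mul, zero_mul, Finset.sum_sub_distrib]
  rw [Finset.sum_ite_eq Finset.univ (G.tgt e) θ, Finset.sum_ite_eq Finset.univ (G.src e) θ]
  simp

lemma cob_const (G : OrientedGraph V E) (hconn : G.toSimpleGraph.Connected)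
    (θ : V → ℝ) (h : G.cob *ᵥ θ = 0) (r s : V) : θ r = θ s := by
  have hadj : ∀ a b, G.toSimpleGraph.Adj a b → θ a = θ b := by
    rintro a b ⟨e, he⟩
    have he0 : (G.cob *ᵥ θ) e = 0 := by rw [h]; rfl
    rw [cob_apply] at he0
    rcases he with ⟨h1, h2⟩ | ⟨h1, h2⟩ <;> · subst h1; subst h2; linarith
  obtain ⟨w⟩ := hconn.preconnected r s
  induction w with
  | nil => rfl
  | cons hadj' p ih => exact (hadj _ _ hadj').trans ih

lemma ker_cob_eq (G : OrientedGraph V E) (hconn : G.toSimpleGraph.Connected) :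
    LinearMap.ker G.cob.mulVecLin = Submodule.span ℝ {(fun _ => (1:ℝ) : V → ℝ)} := by
  ext θ
  simp only [LinearMap.mem_ker, Matrix.mulVecLin_apply, Submodule.mem_span_singleton]
  constructor
  · intro h
    obtain ⟨v₀⟩ := hconn.nonempty
    refine ⟨θ v₀, funext fun r => ?_⟩
    simp [cob_const G hconn θ h v₀ r]
  · rintro ⟨c, rfl⟩
    funext e
    rw [cob_apply]
    simp

lemma finrank_ker_cob (G : OrientedGraph V E) (hconn : G.toSimpleGraph.Connected) :
    Module.finrank ℝ (LinearMap.ker G.cob.mulVecLin) = 1 := by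
  rw [ker_cob_eq G hconn]
  have h1 : (fun _ => (1:ℝ) : V → ℝ) ≠ 0 := by
    obtain ⟨v₀⟩ := hconn.nonempty
    intro h
    exact one_ne_zero (congrFun h v₀)
  exact finrank_span_singleton h1


lemma quad_id (G : OrientedGraph V E) (H : Matrix V V ℝ) (hsymm : H.IsSymm)
    (hsupp : G.StrictSupport H) (lam : ℝ) (ψ : V → ℝ) (heig : H *ᵥ ψ = lam • ψ)
    (θ : V → ℝ) :
    (G.cob *ᵥ θ) ⬝ᵥ (PhiMat G H ψ *ᵥ (G.cob *ᵥ θ))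
      = (ψ * θ) ⬝ᵥ ((H - lam • (1 : Matrix V V ℝ)) *ᵥ (ψ * θ)) := by
  classical
  set off : V → V → ℝ := fun r s => if r = s then 0 else H r s with hoffdef
  have hoffsymm : ∀ r s, off r s = off s r := by
    intro r s
    by_cases h : r = s
    · subst h; rfl
    · simp only [hoffdef, if_neg h, if_neg (Ne.symm h)]
      exact (hsymm.apply r s).symm
  set T1 : ℝ := ∑ r, ∑ s, off r s * ψ r * ψ s * (θ r)^2 with hT1
  set T2 : ℝ := ∑ r, ∑ s, off r s * ψ r * ψ s * (θ r * θ s) with hT2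
  -- RHS = T2 - T1
  have hR : (ψ * θ) ⬝ᵥ ((H - lam • (1 : Matrix V V ℝ)) *ᵥ (ψ * θ)) = T2 - T1 := by
    have hBsplit : ∀ r s, (H - lam • (1 : Matrix V V ℝ)) r s
        = off r s + (if r = s then H r r - lam else 0) := by
      intro r s
      by_cases h : r = s
      · subst h
        simp [hoffdef, Matrix.sub_apply, Matrix.smul_apply, Matrix.one_apply]
      · simp [hoffdef, Matrix.sub_apply, Matrix.smul_apply, Matrix.one_apply, h]
    have h1 : (ψ * θ) ⬝ᵥ ((H - lam • (1 : Matrix V V ℝ)) *ᵥ (ψ * θ))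
        = ∑ r, ∑ s, (ψ r * θ r) * ((H - lam • (1 : Matrix V V ℝ)) r s * (ψ s * θ s)) := by
      simp only [dotProduct, Matrix.mulVec, Pi.mul_apply, Finset.mul_sum]
    rw [h1]
    have h2 : ∀ r, ∑ s, (ψ r * θ r) * ((H - lam • (1 : Matrix V V ℝ)) r s * (ψ s * θ s))
        = (∑ s, off r s * ψ r * ψ s * (θ r * θ s)) + (H r r - lam) * (ψ r * θ r)^2 := by
      intro r
      have h3 : ∀ s, (ψ r * θ r) * ((H - lam • (1 : Matrix V V ℝ)) r s * (ψ s * θ s))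
          = off r s * ψ r * ψ s * (θ r * θ s)
            + (if r = s then (H r r - lam) * (ψ s * θ s) * (ψ r * θ r) else 0) := by
        intro s
        rw [hBsplit]
        by_cases h : r = s
        · subst h; simp [hoffdef]; ring
        · simp [h]; ring
      rw [Finset.sum_congr rfl fun s _ => h3 s, Finset.sum_add_distrib,
        Finset.sum_ite_eq Finset.univ r (fun s => (H r r - lam) * (ψ s * θ s) * (ψ r * θ r))]
      simp; ring
    rw [Finset.sum_congr rfl fun r _ => h2 r, Finset.sum_add_distrib]
    -- the diagonal term
    have h4 : ∀ r, (H r r - lam) * (ψ r * θ r)^2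
        = -(∑ s, off r s * ψ r * ψ s * (θ r)^2) := by
      intro r
      have h5 : ∑ s, H r s * ψ s = lam * ψ r := by
        have := congrFun heig r
        simpa [Matrix.mulVec, dotProduct, Pi.smul_apply, smul_eq_mul] using this
      have h6 : ∑ s, off r s * ψ s = lam * ψ r - H r r * ψ r := by
        have h7 : ∀ s, H r s * ψ s = off r s * ψ s + (if r = s then H r s * ψ s else 0) := by
          intro s
          by_cases h : r = s
          · subst h; simp [hoffdef]
          · simp [hoffdef, h]
        rw [Finset.sum_congr rfl fun s _ => h7 s, Finset.sum_add_distrib,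
          Finset.sum_ite_eq Finset.univ r (fun s => H r s * ψ s)] at h5
        simp at h5
        linarith
      have h8 : ∑ s, off r s * ψ r * ψ s * (θ r)^2
          = (∑ s, off r s * ψ s) * (ψ r * (θ r)^2) := by
        rw [Finset.sum_mul]
        exact Finset.sum_congr rfl fun s _ => by ring
      rw [h8, h6]
      ring
    rw [Finset.sum_congr rfl fun r _ => h4 r]
    rw [hT2, hT1, Finset.sum_neg_distrib]
    ring
  -- symmetry swap
  have hswap : ∑ r, ∑ s, off r s * ψ r * ψ s * (θ s)^2 = T1 := by
    rw [Finset.sum_comm, hT1]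
    refine Finset.sum_congr rfl fun s _ => Finset.sum_congr rfl fun r _ => ?_
    rw [hoffsymm s r]
    ring
  -- LHS = T2 - T1 via edge/pair bijection
  have hL : (G.cob *ᵥ θ) ⬝ᵥ (PhiMat G H ψ *ᵥ (G.cob *ᵥ θ)) = T2 - T1 := by
    have hL1 : (G.cob *ᵥ θ) ⬝ᵥ (PhiMat G H ψ *ᵥ (G.cob *ᵥ θ))
        = ∑ e, -(ψ (G.src e) * H (G.src e) (G.tgt e) * ψ (G.tgt e))
            * (θ (G.tgt e) - θ (G.src e))^2 := by
      simp only [dotProduct, PhiMat, Matrix.mulVec_diagonal, cob_apply]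
      exact Finset.sum_congr rfl fun e _ => by ring
    set F : V × V → ℝ := fun p => off p.1 p.2 * ψ p.1 * ψ p.2 * (θ p.1 - θ p.2)^2 with hF
    set g : E ⊕ E → V × V :=
      Sum.elim (fun e => (G.src e, G.tgt e)) (fun e => (G.tgt e, G.src e)) with hg
    have hginj : Function.Injective g := by
      intro a b hab
      rcases a with e | e <;> rcases b with f | f <;>
        simp only [hg, Sum.elim_inl, Sum.elim_inr, Prod.mk.injEq] at hab
      · rw [G.edgeInj e f (Or.inl hab)]
      · exfalso
        have hef := G.edgeInj e f (Or.inr ⟨hab.1, hab.2⟩)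
        subst hef
        exact G.loopless e hab.1
      · exfalso
        have hef := G.edgeInj e f (Or.inr ⟨hab.2, hab.1⟩)
        subst hef
        exact G.loopless e hab.2
      · rw [G.edgeInj e f (Or.inl ⟨hab.2, hab.1⟩)]
    have hcover : ∀ p : V × V, p ∉ Finset.image g Finset.univ → F p = 0 := by
      intro p hp
      by_contra hFp
      have hoffne : off p.1 p.2 ≠ 0 := by
        intro h0
        exact hFp (by simp [hF, h0])
      have hne : p.1 ≠ p.2 := by
        intro h0
        exact hoffne (by simp [hoffdef, h0])
      have hHne : H p.1 p.2 ≠ 0 := by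
        intro h0
        exact hoffne (by simp [hoffdef, if_neg hne, h0])
      have hadj := (hsupp p.1 p.2 hne).mp hHne
      obtain ⟨e, he⟩ := hadj
      apply hp
      rcases he with ⟨h1, h2⟩ | ⟨h1, h2⟩
      · exact Finset.mem_image.mpr ⟨Sum.inl e, Finset.mem_univ _, by simp [hg, h1, h2]⟩
      · exact Finset.mem_image.mpr ⟨Sum.inr e, Finset.mem_univ _, by simp [hg, h1, h2]⟩
    have hS1 : ∑ r, ∑ s, F (r, s) = ∑ p ∈ Finset.image g Finset.univ, F p := by
      rw [← Fintype.sum_prod_type]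
      exact (Finset.sum_subset (Finset.subset_univ _) fun p _ hp => hcover p hp).symm
    have hS2 : ∑ p ∈ Finset.image g Finset.univ, F p = ∑ x, F (g x) :=
      Finset.sum_image fun x _ y _ h => hginj h
    have hS3 : ∑ x : E ⊕ E, F (g x) = ∑ e, F (G.src e, G.tgt e) + ∑ e, F (G.tgt e, G.src e) := by
      rw [Fintype.sum_sum_type]
      rfl
    have hFsym : ∀ e, F (G.tgt e, G.src e) = F (G.src e, G.tgt e) := by
      intro e
      simp only [hF]
      rw [hoffsymm (G.tgt e) (G.src e)]
      ring
    have hFval : ∀ e, F (G.src e, G.tgt e)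
        = H (G.src e) (G.tgt e) * ψ (G.src e) * ψ (G.tgt e) * (θ (G.src e) - θ (G.tgt e))^2 := by
      intro e
      simp only [hF, hoffdef, if_neg (G.loopless e)]
    have hsum : ∑ r, ∑ s, F (r, s) = (T1 - T2) + (T1 - T2) := by
      have hexp : ∀ r s, F (r, s) = off r s * ψ r * ψ s * (θ r)^2
          - 2 * (off r s * ψ r * ψ s * (θ r * θ s)) + off r s * ψ r * ψ s * (θ s)^2 := by
        intro r s
        simp only [hF]
        ring
      calc ∑ r, ∑ s, F (r, s)
          = ∑ r, ∑ s, (off r s * ψ r * ψ s * (θ r)^2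
            - 2 * (off r s * ψ r * ψ s * (θ r * θ s)) + off r s * ψ r * ψ s * (θ s)^2) :=
            Finset.sum_congr rfl fun r _ => Finset.sum_congr rfl fun s _ => hexp r s
        _ = T1 - 2 * T2 + T1 := by
            simp only [Finset.sum_add_distrib, Finset.sum_sub_distrib, ← Finset.mul_sum]
            rw [hswap]
        _ = (T1 - T2) + (T1 - T2) := by ring
    have hchain := hS1.trans (hS2.trans hS3)
    rw [Finset.sum_congr rfl fun e _ => hFsym e] at hchain
    rw [hsum] at hchain
    have hhalf : ∑ e, F (G.src e, G.tgt e) = T1 - T2 := by linarith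
    rw [hL1]
    have hneg : ∑ e, -(ψ (G.src e) * H (G.src e) (G.tgt e) * ψ (G.tgt e))
          * (θ (G.tgt e) - θ (G.src e))^2
        = -∑ e, F (G.src e, G.tgt e) := by
      rw [← Finset.sum_neg_distrib]
      refine Finset.sum_congr rfl fun e _ => ?_
      rw [hFval e]
      ring
    rw [hneg, hhalf]
    ring
  rw [hL, hR]

noncomputable def blockMap {V' E' : Type*} [Fintype V'] [Fintype E'] {β : ℕ}
    (A₁ : Matrix E' V' ℝ) (A₃ : Matrix (Fin β) V' ℝ) (C : Matrix E' (Fin β) ℝ)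
    (A₄ : Matrix (Fin β) (Fin β) ℝ) :
    ((V' → ℝ) × ((Fin β) → ℝ)) →ₗ[ℝ] ((E' ⊕ Fin β) → ℝ) where
  toFun p := Sum.elim (A₁ *ᵥ p.1 + C *ᵥ p.2) (A₃ *ᵥ p.1 + A₄ *ᵥ p.2)
  map_add' p q := by
    funext i
    cases i with
    | inl e => simp [Matrix.mulVec_add]; ring
    | inr j => simp [Matrix.mulVec_add]; ring
  map_smul' c p := by
    funext i
    cases i with
    | inl e => simp [Matrix.mulVec_smul]; ring
    | inr j => simp [Matrix.mulVec_smul]; ring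

lemma negEig_eq {m : Type*} [Fintype m] [DecidableEq m] {A : Matrix m m ℝ}
    (hA : A.IsHermitian) :
    negEig A = Fintype.card {i // hA.eigenvalues i < 0} := by
  rw [negEig, dif_pos hA, Nat.card_eq_fintype_card]

end NodalAux

/-- for the block matrix `M = [[Φ, C],[Cᵀ, 0]]`, `n₋(M) = n₋(H-λI) + β`. -/
theorem block_matrix_neg_index
    {V E : Type*} [Fintype V] [Fintype E] [DecidableEq V] [DecidableEq E]
    (G : OrientedGraph V E) (hconn : G.toSimpleGraph.Connected)
    (H : Matrix V V ℝ) (hsymm : H.IsSymm) (hsupp : G.StrictSupport H)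
    (lam : ℝ) (ψ : V → ℝ) (heig : H.mulVec ψ = lam • ψ)
    (hker : Module.finrank ℝ (LinearMap.ker (H - lam • (1 : Matrix V V ℝ)).mulVecLin) = 1)
    (hψ : ∀ r, ψ r ≠ 0)
    {β : ℕ} (C : Matrix E (Fin β) ℝ) (hC : IsFrame G C) :
    negEig (Matrix.fromBlocks (PhiMat G H ψ) C Cᵀ (0 : Matrix (Fin β) (Fin β) ℝ)) =
      negEig (H - lam • (1 : Matrix V V ℝ)) + β := by
  classical
  set B := H - lam • (1 : Matrix V V ℝ) with hBdef
  set Φ := PhiMat G H ψ with hΦdef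
  set d := G.cob with hddef
  set M := Matrix.fromBlocks Φ C Cᵀ (0 : Matrix (Fin β) (Fin β) ℝ) with hMdef
  -- Hermitian facts
  have hBsymm : B.IsSymm := by
    rw [Matrix.IsSymm, hBdef, Matrix.transpose_sub, Matrix.transpose_smul, Matrix.transpose_one,
      hsymm]
  have hBH : B.IsHermitian := by
    rw [Matrix.IsHermitian, Matrix.conjTranspose_eq_transpose_of_trivial]
    exact hBsymm
  have hΦsymm : Φᵀ = Φ := by rw [hΦdef, PhiMat, Matrix.diagonal_transpose]
  have hMH : M.IsHermitian := by
    rw [Matrix.IsHermitian, hMdef, Matrix.fromBlocks_conjTranspose]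
    simp only [Matrix.conjTranspose_eq_transpose_of_trivial, Matrix.transpose_transpose,
      Matrix.transpose_zero, hΦsymm]
  -- Frame facts
  have hCinj : Function.Injective C.mulVecLin := LinearMap.ker_eq_bot.mp hC.1
  have hdC : dᵀ * C = 0 := by
    ext v j
    have hmem : C *ᵥ Pi.single j 1 ∈ G.cycleSpace := by
      rw [← hC.2]
      exact ⟨Pi.single j 1, Matrix.mulVecLin_apply _ _⟩
    have h0 : (G.cob)ᵀ *ᵥ (C *ᵥ Pi.single j 1) = 0 := by
      have := LinearMap.mem_ker.mp hmem
      rwa [Matrix.mulVecLin_apply] at this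
    have h1 : (dᵀ * C) *ᵥ Pi.single j 1 = 0 := by
      rw [← Matrix.mulVec_mulVec, hddef]
      exact h0
    have h2 := congrFun h1 v
    simp only [Matrix.mulVec_single, mul_one, Pi.zero_apply] at h2
    simpa using h2
  have hCd : Cᵀ * d = 0 := by
    have h1 := congrArg Matrix.transpose hdC
    simpa [Matrix.transpose_mul] using h1
  -- Gram matrix facts
  set Gm := Cᵀ * C with hGmdef
  have hGmsymm : Gmᵀ = Gm := by
    rw [hGmdef, Matrix.transpose_mul, Matrix.transpose_transpose]
  have hGmquad : ∀ w : Fin β → ℝ, w ⬝ᵥ (Gm *ᵥ w) = (C *ᵥ w) ⬝ᵥ (C *ᵥ w) := by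
    intro w
    rw [hGmdef, ← Matrix.mulVec_mulVec, Matrix.dotProduct_mulVec, Matrix.vecMul_transpose]
  have hdotself : ∀ {k : Type} (v : k → ℝ) (inst : Fintype k), 0 ≤ v ⬝ᵥ v := by
    intro k v inst
    exact Finset.sum_nonneg fun i _ => mul_self_nonneg (v i)
  have hGmnonneg : ∀ w : Fin β → ℝ, 0 ≤ w ⬝ᵥ (Gm *ᵥ w) := by
    intro w
    rw [hGmquad]
    exact Finset.sum_nonneg fun i _ => mul_self_nonneg _
  have hCwzero : ∀ w : Fin β → ℝ, C *ᵥ w = 0 → w = 0 := by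
    intro w h0
    apply hCinj
    rw [Matrix.mulVecLin_apply, h0, map_zero]
  have hGmpos : ∀ w : Fin β → ℝ, w ≠ 0 → 0 < w ⬝ᵥ (Gm *ᵥ w) := by
    intro w hw
    rw [hGmquad]
    have hCw : C *ᵥ w ≠ 0 := fun h0 => hw (hCwzero w h0)
    have h1 : (C *ᵥ w) ⬝ᵥ (C *ᵥ w) ≠ 0 := fun h => hCw (dotProduct_self_eq_zero.mp h)
    have h2 : (0:ℝ) ≤ (C *ᵥ w) ⬝ᵥ (C *ᵥ w) :=
      Finset.sum_nonneg fun i _ => mul_self_nonneg _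
    exact lt_of_le_of_ne h2 (Ne.symm h1)
  have hGmPD : Gm.PosDef := by
    refine Matrix.PosDef.of_dotProduct_mulVec_pos ?_ fun x hx => ?_
    · rw [Matrix.IsHermitian, Matrix.conjTranspose_eq_transpose_of_trivial, hGmsymm]
    · have hsx : star x = x := funext fun i => star_trivial (x i)
      rw [hsx]
      exact hGmpos x hx
  have hdet : IsUnit Gm.det := hGmPD.det_pos.ne'.isUnit
  set Gi := Gm⁻¹ with hGidef
  have hGmGi : Gm * Gi = 1 := Matrix.mul_nonsing_inv _ hdet
  have hGiDot : ∀ (w' z : Fin β → ℝ), (Gm *ᵥ w') ⬝ᵥ (Gi *ᵥ z) = w' ⬝ᵥ z := by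
    intro w' z
    rw [dotProduct_comm, Matrix.dotProduct_mulVec]
    have h1 : (Gi *ᵥ z) ᵥ* Gm = Gm *ᵥ (Gi *ᵥ z) := by
      conv_lhs => rw [← hGmsymm]
      rw [Matrix.vecMul_transpose]
    rw [h1, Matrix.mulVec_mulVec, hGmGi, Matrix.one_mulVec, dotProduct_comm]
  have hsymdot : ∀ (x y : E → ℝ), x ⬝ᵥ (Φ *ᵥ y) = y ⬝ᵥ (Φ *ᵥ x) := by
    intro x y
    calc x ⬝ᵥ (Φ *ᵥ y) = (x ᵥ* Φ) ⬝ᵥ y := Matrix.dotProduct_mulVec x Φ y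
      _ = (Φᵀ *ᵥ x) ⬝ᵥ y := by rw [Matrix.mulVec_transpose]
      _ = (Φ *ᵥ x) ⬝ᵥ y := by rw [hΦsymm]
      _ = y ⬝ᵥ (Φ *ᵥ x) := dotProduct_comm _ _
  -- the conjugated coboundary
  set A₁ := d * Matrix.diagonal (fun r => (ψ r)⁻¹) with hA₁def
  have hCA₁ : Cᵀ * A₁ = 0 := by
    rw [hA₁def, ← Matrix.mul_assoc, hCd, Matrix.zero_mul]
  have hquadx : ∀ x : V → ℝ, (A₁ *ᵥ x) ⬝ᵥ (Φ *ᵥ (A₁ *ᵥ x)) = x ⬝ᵥ (B *ᵥ x) := by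
    intro x
    have hux : A₁ *ᵥ x = d *ᵥ (fun r => (ψ r)⁻¹ * x r) := by
      rw [hA₁def, ← Matrix.mulVec_mulVec]
      have hdg : Matrix.diagonal (fun r => (ψ r)⁻¹) *ᵥ x = fun r => (ψ r)⁻¹ * x r :=
        funext fun r => Matrix.mulVec_diagonal _ _ _
      rw [hdg]
    have h1 := NodalAux.quad_id G H hsymm hsupp lam ψ heig (fun r => (ψ r)⁻¹ * x r)
    rw [← hddef, ← hΦdef, ← hBdef] at h1
    have h2 : ψ * (fun r => (ψ r)⁻¹ * x r) = x := by
      funext r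
      simp only [Pi.mul_apply]
      rw [← mul_assoc, mul_inv_cancel₀ (hψ r), one_mul]
    rw [hux]
    rw [h1, h2]
  -- quadratic form on the block matrix
  have hMmul : ∀ (a : E → ℝ) (b : Fin β → ℝ),
      (Sum.elim a b) ⬝ᵥ (M *ᵥ Sum.elim a b)
        = a ⬝ᵥ (Φ *ᵥ a) + a ⬝ᵥ (C *ᵥ b) + b ⬝ᵥ (Cᵀ *ᵥ a) := by
    intro a b
    rw [hMdef, Matrix.fromBlocks_mulVec, sumElim_dotProduct_sumElim]
    simp only [Sum.elim_comp_inl, Sum.elim_comp_inr, Matrix.zero_mulVec, add_zero,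
      dotProduct_add]
    try ring
  have hCtu : ∀ x : V → ℝ, Cᵀ *ᵥ (A₁ *ᵥ x) = 0 := by
    intro x
    rw [Matrix.mulVec_mulVec, hCA₁, Matrix.zero_mulVec]
  have hCta : ∀ (x : V → ℝ) (w : Fin β → ℝ),
      Cᵀ *ᵥ (A₁ *ᵥ x + C *ᵥ w) = Gm *ᵥ w := by
    intro x w
    rw [Matrix.mulVec_add, hCtu, zero_add, Matrix.mulVec_mulVec, hGmdef]
  have hwCt : ∀ (w : Fin β → ℝ) (z : E → ℝ), w ⬝ᵥ (Cᵀ *ᵥ z) = (C *ᵥ w) ⬝ᵥ z := by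
    intro w z
    rw [Matrix.dotProduct_mulVec, Matrix.vecMul_transpose]
  have hform : ∀ (t : ℝ) (x : V → ℝ) (w : Fin β → ℝ),
      (NodalAux.blockMap A₁ (-(Gi * (Cᵀ * (Φ * A₁)))) C
          (t • (1 : Matrix (Fin β) (Fin β) ℝ) - (2⁻¹ : ℝ) • (Gi * (Cᵀ * (Φ * C)))) (x, w))
        ⬝ᵥ (M *ᵥ (NodalAux.blockMap A₁ (-(Gi * (Cᵀ * (Φ * A₁)))) C
          (t • (1 : Matrix (Fin β) (Fin β) ℝ) - (2⁻¹ : ℝ) • (Gi * (Cᵀ * (Φ * C)))) (x, w)))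
      = x ⬝ᵥ (B *ᵥ x) + 2 * t * (w ⬝ᵥ (Gm *ᵥ w)) := by
    intro t x w
    have hbm : NodalAux.blockMap A₁ (-(Gi * (Cᵀ * (Φ * A₁)))) C
          (t • (1 : Matrix (Fin β) (Fin β) ℝ) - (2⁻¹ : ℝ) • (Gi * (Cᵀ * (Φ * C)))) (x, w)
        = Sum.elim (A₁ *ᵥ x + C *ᵥ w)
            ((-(Gi * (Cᵀ * (Φ * A₁)))) *ᵥ x
              + (t • (1 : Matrix (Fin β) (Fin β) ℝ) - (2⁻¹ : ℝ) • (Gi * (Cᵀ * (Φ * C)))) *ᵥ w) :=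
      rfl
    rw [hbm, hMmul]
    set b := (-(Gi * (Cᵀ * (Φ * A₁)))) *ᵥ x
        + (t • (1 : Matrix (Fin β) (Fin β) ℝ) - (2⁻¹ : ℝ) • (Gi * (Cᵀ * (Φ * C)))) *ᵥ w with hbdef
    -- third summand
    have h3 : b ⬝ᵥ (Cᵀ *ᵥ (A₁ *ᵥ x + C *ᵥ w)) = (Gm *ᵥ w) ⬝ᵥ b := by
      rw [hCta, dotProduct_comm]
    -- second summand
    have h2 : (A₁ *ᵥ x + C *ᵥ w) ⬝ᵥ (C *ᵥ b) = (Gm *ᵥ w) ⬝ᵥ b := by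
      rw [Matrix.dotProduct_mulVec, ← Matrix.mulVec_transpose, hCta]
    -- value of (Gm *ᵥ w) ⬝ᵥ b
    have hb1 : (Gm *ᵥ w) ⬝ᵥ b
        = -( (C *ᵥ w) ⬝ᵥ (Φ *ᵥ (A₁ *ᵥ x)) ) + t * (w ⬝ᵥ (Gm *ᵥ w))
          - 2⁻¹ * ((C *ᵥ w) ⬝ᵥ (Φ *ᵥ (C *ᵥ w))) := by
      rw [hbdef, dotProduct_add]
      have hbA : (-(Gi * (Cᵀ * (Φ * A₁)))) *ᵥ x = -(Gi *ᵥ ((Cᵀ * (Φ * A₁)) *ᵥ x)) := by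
        rw [Matrix.neg_mulVec, Matrix.mulVec_mulVec]
      have hbB : (t • (1 : Matrix (Fin β) (Fin β) ℝ) - (2⁻¹ : ℝ) • (Gi * (Cᵀ * (Φ * C)))) *ᵥ w
          = t • w - (2⁻¹ : ℝ) • (Gi *ᵥ ((Cᵀ * (Φ * C)) *ᵥ w)) := by
        rw [Matrix.sub_mulVec, Matrix.smul_mulVec, Matrix.one_mulVec,
          Matrix.smul_mulVec, Matrix.mulVec_mulVec]
      rw [hbA, hbB]
      rw [dotProduct_neg, hGiDot]
      rw [dotProduct_sub, dotProduct_smul, dotProduct_smul, hGiDot]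
      have hx1 : w ⬝ᵥ ((Cᵀ * (Φ * A₁)) *ᵥ x) = (C *ᵥ w) ⬝ᵥ (Φ *ᵥ (A₁ *ᵥ x)) := by
        rw [← Matrix.mulVec_mulVec, hwCt, Matrix.mulVec_mulVec, ← Matrix.mulVec_mulVec]
      have hx2 : w ⬝ᵥ ((Cᵀ * (Φ * C)) *ᵥ w) = (C *ᵥ w) ⬝ᵥ (Φ *ᵥ (C *ᵥ w)) := by
        rw [← Matrix.mulVec_mulVec, hwCt, Matrix.mulVec_mulVec, ← Matrix.mulVec_mulVec]
      rw [hx1, hx2]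
      rw [dotProduct_comm (Gm *ᵥ w) w]
      simp only [smul_eq_mul]
      ring
    -- first summand
    have h1 : (A₁ *ᵥ x + C *ᵥ w) ⬝ᵥ (Φ *ᵥ (A₁ *ᵥ x + C *ᵥ w))
        = x ⬝ᵥ (B *ᵥ x) + 2 * ((C *ᵥ w) ⬝ᵥ (Φ *ᵥ (A₁ *ᵥ x)))
          + (C *ᵥ w) ⬝ᵥ (Φ *ᵥ (C *ᵥ w)) := by
      rw [Matrix.mulVec_add, dotProduct_add, add_dotProduct,
        add_dotProduct]
      rw [hquadx]
      have hcross : (A₁ *ᵥ x) ⬝ᵥ (Φ *ᵥ (C *ᵥ w)) = (C *ᵥ w) ⬝ᵥ (Φ *ᵥ (A₁ *ᵥ x)) :=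
        hsymdot _ _
      rw [hcross]
      ring
    rw [h3, h2, hb1, h1]
    ring
  -- eigen-subspaces of B
  obtain ⟨Wn, hWnrank, hWnprop⟩ := NodalAux.eig_subspace hBH (fun i => hBH.eigenvalues i < 0)
  obtain ⟨Wp, hWprank, hWpprop⟩ := NodalAux.eig_subspace hBH (fun i => 0 < hBH.eigenvalues i)
  have hWnneg : ∀ x ∈ Wn, x ≠ 0 → x ⬝ᵥ (B *ᵥ x) < 0 := by
    intro x hx hxne
    obtain ⟨c, hxc, hform'⟩ := hWnprop x hx
    have hcne : c ≠ 0 := by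
      intro h0
      apply hxne
      rw [hxc, h0]
      simp
    obtain ⟨i0, hi0⟩ := Function.ne_iff.mp hcne
    rw [hform']
    have hlt : hBH.eigenvalues i0.1 * (c i0)^2 < 0 := by
      have h1 : (0:ℝ) < (c i0)^2 := by
        have := sq_nonneg (c i0)
        rcases this.lt_or_eq with h | h
        · exact h
        · exact absurd (pow_eq_zero_iff (n := 2) (by norm_num) |>.mp h.symm) hi0
      exact mul_neg_of_neg_of_pos i0.2 h1
    calc ∑ i, hBH.eigenvalues i.1 * (c i)^2 < ∑ _i : {i // hBH.eigenvalues i < 0}, (0:ℝ) := by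
          refine Finset.sum_lt_sum (fun i _ => ?_) ⟨i0, Finset.mem_univ _, hlt⟩
          exact mul_nonpos_of_nonpos_of_nonneg (le_of_lt i.2) (sq_nonneg _)
      _ = 0 := by simp
  have hWppos : ∀ x ∈ Wp, x ≠ 0 → 0 < x ⬝ᵥ (B *ᵥ x) := by
    intro x hx hxne
    obtain ⟨c, hxc, hform'⟩ := hWpprop x hx
    have hcne : c ≠ 0 := by
      intro h0
      apply hxne
      rw [hxc, h0]
      simp
    obtain ⟨i0, hi0⟩ := Function.ne_iff.mp hcne
    rw [hform']
    have hlt : (0:ℝ) < hBH.eigenvalues i0.1 * (c i0)^2 := by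
      have h1 : (0:ℝ) < (c i0)^2 := by
        have := sq_nonneg (c i0)
        rcases this.lt_or_eq with h | h
        · exact h
        · exact absurd (pow_eq_zero_iff (n := 2) (by norm_num) |>.mp h.symm) hi0
      exact mul_pos i0.2 h1
    calc (0:ℝ) = ∑ _i : {i // 0 < hBH.eigenvalues i}, (0:ℝ) := by simp
      _ < ∑ i, hBH.eigenvalues i.1 * (c i)^2 := by
          refine Finset.sum_lt_sum (fun i _ => ?_) ⟨i0, Finset.mem_univ _, hlt⟩
          exact mul_nonneg (le_of_lt i.2) (sq_nonneg _)
  have hWnle : ∀ x ∈ Wn, x ⬝ᵥ (B *ᵥ x) ≤ 0 := by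
    intro x hx
    by_cases hx0 : x = 0
    · subst hx0
      simp [zero_dotProduct]
    · exact le_of_lt (hWnneg x hx hx0)
  have hWpge : ∀ x ∈ Wp, 0 ≤ x ⬝ᵥ (B *ᵥ x) := by
    intro x hx
    by_cases hx0 : x = 0
    · subst hx0
      simp [zero_dotProduct]
    · exact le_of_lt (hWppos x hx hx0)
  -- the two embedded subspaces of ℝ^{E ⊕ β}
  set Ln := (NodalAux.blockMap A₁ (-(Gi * (Cᵀ * (Φ * A₁)))) C
      ((-1 : ℝ) • (1 : Matrix (Fin β) (Fin β) ℝ) - (2⁻¹ : ℝ) • (Gi * (Cᵀ * (Φ * C))))).comp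
      ((Wn.subtype).prodMap (LinearMap.id (R := ℝ) (M := Fin β → ℝ))) with hLndef
  set Lp := (NodalAux.blockMap A₁ (-(Gi * (Cᵀ * (Φ * A₁)))) C
      ((1 : ℝ) • (1 : Matrix (Fin β) (Fin β) ℝ) - (2⁻¹ : ℝ) • (Gi * (Cᵀ * (Φ * C))))).comp
      ((Wp.subtype).prodMap (LinearMap.id (R := ℝ) (M := Fin β → ℝ))) with hLpdef
  -- generic kernel argument
  have hkergen : ∀ (x : V → ℝ) (w : Fin β → ℝ) (A₄ : Matrix (Fin β) (Fin β) ℝ),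
      NodalAux.blockMap A₁ (-(Gi * (Cᵀ * (Φ * A₁)))) C A₄ (x, w) = 0 →
      (w = 0 ∧ A₁ *ᵥ x = 0 ∧ x ⬝ᵥ (B *ᵥ x) = 0) := by
    intro x w A₄ h0
    have ha : A₁ *ᵥ x + C *ᵥ w = 0 := by
      funext e
      exact congrFun h0 (Sum.inl e)
    have hGw : Gm *ᵥ w = 0 := by
      rw [← hCta x w, ha, Matrix.mulVec_zero]
    have hw : w = 0 := by
      by_contra hwne
      have := hGmpos w hwne
      rw [hGw] at this
      simp at this
    subst hw
    have hu : A₁ *ᵥ x = 0 := by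
      rw [Matrix.mulVec_zero, add_zero] at ha
      exact ha
    refine ⟨rfl, hu, ?_⟩
    rw [← hquadx, hu]
    simp
  have hkn : LinearMap.ker Ln = ⊥ := by
    rw [LinearMap.ker_eq_bot']
    intro p hp
    have h0 : NodalAux.blockMap A₁ (-(Gi * (Cᵀ * (Φ * A₁)))) C
        ((-1 : ℝ) • (1 : Matrix (Fin β) (Fin β) ℝ) - (2⁻¹ : ℝ) • (Gi * (Cᵀ * (Φ * C))))
        ((p.1 : V → ℝ), p.2) = 0 := hp
    obtain ⟨hw, -, hx0⟩ := hkergen _ _ _ h0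
    have hx : (p.1 : V → ℝ) = 0 := by
      by_contra hxne
      exact absurd hx0 (ne_of_lt (hWnneg _ p.1.2 hxne))
    have : p.1 = 0 := Subtype.ext hx
    exact Prod.ext this hw
  have hkp : LinearMap.ker Lp = ⊥ := by
    rw [LinearMap.ker_eq_bot']
    intro p hp
    have h0 : NodalAux.blockMap A₁ (-(Gi * (Cᵀ * (Φ * A₁)))) C
        ((1 : ℝ) • (1 : Matrix (Fin β) (Fin β) ℝ) - (2⁻¹ : ℝ) • (Gi * (Cᵀ * (Φ * C))))
        ((p.1 : V → ℝ), p.2) = 0 := hp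
    obtain ⟨hw, -, hx0⟩ := hkergen _ _ _ h0
    have hx : (p.1 : V → ℝ) = 0 := by
      by_contra hxne
      exact absurd hx0 (ne_of_gt (hWppos _ p.1.2 hxne))
    have : p.1 = 0 := Subtype.ext hx
    exact Prod.ext this hw
  -- ranks of the ranges
  have hrankn : Module.finrank ℝ (LinearMap.range Ln)
      = Fintype.card {i // hBH.eigenvalues i < 0} + β := by
    have h1 := LinearMap.finrank_range_add_finrank_ker Ln
    rw [hkn, finrank_bot, add_zero] at h1
    rw [h1, Module.finrank_prod, hWnrank, Module.finrank_fintype_fun_eq_card, Fintype.card_fin]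
  have hrankp : Module.finrank ℝ (LinearMap.range Lp)
      = Fintype.card {i // 0 < hBH.eigenvalues i} + β := by
    have h1 := LinearMap.finrank_range_add_finrank_ker Lp
    rw [hkp, finrank_bot, add_zero] at h1
    rw [h1, Module.finrank_prod, hWprank, Module.finrank_fintype_fun_eq_card, Fintype.card_fin]
  -- definiteness on the ranges
  have hUnneg : ∀ v ∈ LinearMap.range Ln, v ≠ 0 → v ⬝ᵥ (M *ᵥ v) < 0 := by
    rintro v ⟨p, rfl⟩ hvne
    have hval : Ln p = NodalAux.blockMap A₁ (-(Gi * (Cᵀ * (Φ * A₁)))) C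
        ((-1 : ℝ) • (1 : Matrix (Fin β) (Fin β) ℝ) - (2⁻¹ : ℝ) • (Gi * (Cᵀ * (Φ * C))))
        ((p.1 : V → ℝ), p.2) := rfl
    rw [hval]
    rw [hform (-1) (p.1 : V → ℝ) p.2]
    have hxB := hWnle _ p.1.2
    have hpne : ¬((p.1 : V → ℝ) = 0 ∧ p.2 = 0) := by
      rintro ⟨h1, h2⟩
      apply hvne
      rw [hval, h1, h2]
      exact map_zero _
    by_cases hw : p.2 = 0
    · have hx : (p.1 : V → ℝ) ≠ 0 := fun h => hpne ⟨h, hw⟩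
      have := hWnneg _ p.1.2 hx
      rw [hw]
      simp only [Matrix.mulVec_zero, dotProduct_zero, mul_zero]
      linarith
    · have := hGmpos _ hw
      linarith
  have hUppos : ∀ v ∈ LinearMap.range Lp, v ≠ 0 → 0 < v ⬝ᵥ (M *ᵥ v) := by
    rintro v ⟨p, rfl⟩ hvne
    have hval : Lp p = NodalAux.blockMap A₁ (-(Gi * (Cᵀ * (Φ * A₁)))) C
        ((1 : ℝ) • (1 : Matrix (Fin β) (Fin β) ℝ) - (2⁻¹ : ℝ) • (Gi * (Cᵀ * (Φ * C))))
        ((p.1 : V → ℝ), p.2) := rfl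
    rw [hval]
    rw [hform 1 (p.1 : V → ℝ) p.2]
    have hxB := hWpge _ p.1.2
    have hpne : ¬((p.1 : V → ℝ) = 0 ∧ p.2 = 0) := by
      rintro ⟨h1, h2⟩
      apply hvne
      rw [hval, h1, h2]
      exact map_zero _
    by_cases hw : p.2 = 0
    · have hx : (p.1 : V → ℝ) ≠ 0 := fun h => hpne ⟨h, hw⟩
      have := hWppos _ p.1.2 hx
      rw [hw]
      simp only [Matrix.mulVec_zero, dotProduct_zero, mul_zero]
      linarith
    · have := hGmpos _ hw
      linarith
  -- variational bounds
  have hnB := NodalAux.negdef_le hMH (LinearMap.range Ln) hUnneg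
  have hpB := NodalAux.posdef_le hMH (LinearMap.range Lp) hUppos
  rw [hrankn] at hnB
  rw [hrankp] at hpB
  have hMle := NodalAux.sign_card_le hMH
  have hBpart := NodalAux.sign_partition hBH
  rw [hker] at hBpart
  -- counting edges
  have hkerd := NodalAux.finrank_ker_cob G hconn
  have h5 := LinearMap.finrank_range_add_finrank_ker (G.cob (E := E)).mulVecLin
  rw [hkerd, Module.finrank_fintype_fun_eq_card] at h5
  have h6 := LinearMap.finrank_range_add_finrank_ker ((G.cob (E := E))ᵀ).mulVecLin
  rw [Module.finrank_fintype_fun_eq_card] at h6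
  have h7 : ((G.cob (E := E))ᵀ).rank = (G.cob (E := E)).rank := Matrix.rank_transpose _
  rw [Matrix.rank, Matrix.rank] at h7
  have h8 : Module.finrank ℝ (LinearMap.ker ((G.cob (E := E))ᵀ).mulVecLin) = β := by
    have h9 := LinearMap.finrank_range_add_finrank_ker C.mulVecLin
    rw [hC.1, finrank_bot, add_zero, Module.finrank_fintype_fun_eq_card, Fintype.card_fin,
      hC.2] at h9
    rw [← h9]
    rfl
  have hcardM : Fintype.card (E ⊕ Fin β) = Fintype.card E + β := by
    rw [Fintype.card_sum, Fintype.card_fin]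
  rw [hcardM] at hMle
  -- conclude
  rw [NodalAux.negEig_eq hMH, NodalAux.negEig_eq hBH]
  omega
end

section
/- Let H be a real symmetric n×n matrix strictly supported on the connected graph G, let λ ∈ ℝ and ψ ∈ ℝ^V satisfy Hψ = λψ with dim ker(H − λI) = 1 and ψ_r ≠ 0 for every vertex r, and let C be a frame for the cycle space Z. Then the symmetric block matrix M = [[Φ, C],[C^⊤, 0_β]] is invertible, i.e., n_0(M) = 0. -/
open Matrix

lemma mem_range_of_dot {E V : Type*} [Fintype E] [Fintype V] [DecidableEq E] [DecidableEq V]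
    (B : Matrix E V ℝ) (x : E → ℝ)
    (hx : ∀ z : E → ℝ, Bᵀ *ᵥ z = 0 → z ⬝ᵥ x = 0) :
    x ∈ LinearMap.range B.mulVecLin := by
  by_contra h
  obtain ⟨f, hfx, hbot⟩ :=
    Submodule.exists_dual_map_eq_bot_of_notMem (p := LinearMap.range B.mulVecLin) h inferInstance
  set z : E → ℝ := fun e => f (Pi.single e (1:ℝ)) with hz
  have hf : ∀ u : E → ℝ, f u = z ⬝ᵥ u := by
    intro u
    have hu : u = ∑ e : E, u e • (Pi.single e (1:ℝ) : E → ℝ) := by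
      funext j
      simp [Pi.single_apply, Finset.sum_ite_eq, eq_comm]
    have h2 : f u = ∑ e : E, u e * z e := by
      conv_lhs => rw [hu]
      simp [hz]
    rw [h2]
    simp [dotProduct, mul_comm]
  have hBz : Bᵀ *ᵥ z = 0 := by
    funext v
    have h1 : ∀ θ : V → ℝ, (Bᵀ *ᵥ z) ⬝ᵥ θ = 0 := by
      intro θ
      have hzero : f (B *ᵥ θ) = 0 := by
        have hm : f (B.mulVecLin θ) ∈ (LinearMap.range B.mulVecLin).map f :=
          Submodule.mem_map_of_mem (LinearMap.mem_range_self _ θ)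
        rw [hbot] at hm
        simpa [Matrix.mulVecLin_apply] using hm
      rw [hf] at hzero
      rwa [Matrix.mulVec_transpose, ← Matrix.dotProduct_mulVec]
    have := h1 (Pi.single v 1)
    simpa [dotProduct, Pi.single_apply, Finset.sum_ite_eq] using this
  exact hfx (by rw [hf]; exact hx z hBz)
open Matrix

section Key
variable {V E : Type*} [Fintype V] [Fintype E] [DecidableEq V] [DecidableEq E]
variable (G : OrientedGraph V E) (H : Matrix V V ℝ) (ψ θ : V → ℝ)

lemma cob_mulVec (e : E) : (G.cob *ᵥ θ) e = θ (G.tgt e) - θ (G.src e) := by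
  simp [Matrix.mulVec, dotProduct, OrientedGraph.cob, sub_mul,
    Finset.sum_sub_distrib, Finset.sum_ite_eq]

lemma key_sum (hsymm : H.IsSymm) (hsupp : G.StrictSupport H) (v : V) :
    (G.cobᵀ *ᵥ (PhiMat G H ψ *ᵥ (G.cob *ᵥ θ))) v
      = ∑ s : V, ψ v * H v s * ψ s * (θ s - θ v) := by
  have hΦ : ∀ e, (PhiMat G H ψ *ᵥ (G.cob *ᵥ θ)) e
      = -(ψ (G.src e) * H (G.src e) (G.tgt e) * ψ (G.tgt e)) * (θ (G.tgt e) - θ (G.src e)) := by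
    intro e
    rw [PhiMat, Matrix.mulVec_diagonal, cob_mulVec]
  set F : E → V → ℝ := fun e s =>
    (if G.tgt e = v then (if G.src e = s then -(ψ s * H s v * ψ v) * (θ v - θ s) else 0) else 0)
    + (if G.src e = v then (if G.tgt e = s then -(ψ v * H v s * ψ s) * (θ v - θ s) else 0) else 0)
    with hF
  have stepA : (G.cobᵀ *ᵥ (PhiMat G H ψ *ᵥ (G.cob *ᵥ θ))) v = ∑ e : E, ∑ s : V, F e s := by
    rw [Matrix.mulVec_transpose]
    show ∑ e : E, _ = _
    refine Finset.sum_congr rfl fun e _ => ?_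
    rw [hΦ]
    by_cases ht : G.tgt e = v <;> by_cases hs : G.src e = v
    · exact absurd (hs.trans ht.symm) (G.loopless e)
    · simp only [hF, ht, hs, if_true, if_false, add_zero, Finset.sum_ite_eq, Finset.mem_univ,
        OrientedGraph.cob, Matrix.of_apply]
      rw [← ht]
      ring
    · simp only [hF, ht, hs, if_true, if_false, zero_add, Finset.sum_ite_eq, Finset.mem_univ,
        OrientedGraph.cob, Matrix.of_apply]
      rw [← hs]
      ring
    · simp [hF, ht, hs, OrientedGraph.cob]
  rw [stepA, Finset.sum_comm]
  refine Finset.sum_congr rfl fun s _ => ?_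
  by_cases hsv : s = v
  · subst hsv
    rw [Finset.sum_eq_zero, sub_self, mul_zero]
    intro e _
    simp [hF]
  · by_cases hadj : G.toSimpleGraph.Adj v s
    · obtain ⟨e₀, he₀⟩ := hadj
      rw [Finset.sum_eq_single e₀]
      · rcases he₀ with ⟨h1, h2⟩ | ⟨h1, h2⟩
        · simp [hF, h1, h2, hsv]
          ring
        · simp [hF, h1, h2, hsv, hsymm.apply v s]
          ring
      · intro e _ hne
        simp only [hF]
        split_ifs with h1 h2 h3 h4 h5 h6 h7 h8 <;> try ring
        all_goals (
          exfalso; apply hne; apply G.edgeInj e e₀;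
          rcases he₀ with ⟨k1, k2⟩ | ⟨k1, k2⟩ <;>
          first
            | exact Or.inr ⟨‹G.src e = s›.trans k2.symm, ‹G.tgt e = v›.trans k1.symm⟩
            | exact Or.inl ⟨‹G.src e = s›.trans k1.symm, ‹G.tgt e = v›.trans k2.symm⟩
            | exact Or.inl ⟨‹G.src e = v›.trans k1.symm, ‹G.tgt e = s›.trans k2.symm⟩
            | exact Or.inr ⟨‹G.src e = v›.trans k2.symm, ‹G.tgt e = s›.trans k1.symm⟩)
      · intro he; exact absurd (Finset.mem_univ e₀) he
    · have hH : H v s = 0 := by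
        by_contra hne
        exact hadj ((hsupp v s (fun h => hsv h.symm)).1 hne)
      have hH' : H s v = 0 := by rw [hsymm.apply v s]; exact hH
      rw [Finset.sum_eq_zero, hH]
      · ring
      intro e _
      simp [hF, hH, hH']

end Key

/-- the block matrix `M = [[Φ, C],[Cᵀ, 0]]` is invertible: `n₀(M) = 0`. -/
theorem block_matrix_invertible
    {V E : Type*} [Fintype V] [Fintype E] [DecidableEq V] [DecidableEq E]
    (G : OrientedGraph V E) (hconn : G.toSimpleGraph.Connected)
    (H : Matrix V V ℝ) (hsymm : H.IsSymm) (hsupp : G.StrictSupport H)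
    (lam : ℝ) (ψ : V → ℝ) (heig : H.mulVec ψ = lam • ψ)
    (hker : Module.finrank ℝ (LinearMap.ker (H - lam • (1 : Matrix V V ℝ)).mulVecLin) = 1)
    (hψ : ∀ r, ψ r ≠ 0)
    {β : ℕ} (C : Matrix E (Fin β) ℝ) (hC : IsFrame G C) :
    zeroEig (Matrix.fromBlocks (PhiMat G H ψ) C Cᵀ (0 : Matrix (Fin β) (Fin β) ℝ)) = 0 := by
  classical
  rcases isEmpty_or_nonempty V with hV | hV
  · exfalso
    have hb : (LinearMap.ker (H - lam • (1 : Matrix V V ℝ)).mulVecLin) = ⊥ :=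
      Subsingleton.elim _ _
    rw [hb] at hker
    simp at hker
  have hψne : ψ ≠ 0 := fun h => hψ (Classical.arbitrary V) (by rw [h]; rfl)
  have hψker : ψ ∈ LinearMap.ker (H - lam • (1 : Matrix V V ℝ)).mulVecLin := by
    simp [LinearMap.mem_ker, Matrix.mulVecLin_apply, Matrix.sub_mulVec,
      Matrix.smul_mulVec, Matrix.one_mulVec, heig]
  have hspan : Submodule.span ℝ {ψ} ≤ LinearMap.ker (H - lam • (1 : Matrix V V ℝ)).mulVecLin := by
    rw [Submodule.span_le, Set.singleton_subset_iff]
    exact hψker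
  have hkereq : Submodule.span ℝ {ψ} = LinearMap.ker (H - lam • (1 : Matrix V V ℝ)).mulVecLin :=
    Submodule.eq_of_le_of_finrank_le hspan (by rw [hker, finrank_span_singleton hψne])
  rw [zeroEig, Submodule.finrank_eq_zero, LinearMap.ker_eq_bot']
  intro w hw
  set x : E → ℝ := w ∘ Sum.inl with hxdef
  set y : Fin β → ℝ := w ∘ Sum.inr with hydef
  have hw' : Matrix.fromBlocks (PhiMat G H ψ) C Cᵀ (0 : Matrix (Fin β) (Fin β) ℝ) *ᵥ
      Sum.elim x y = 0 := by
    rw [hxdef, hydef, Sum.elim_comp_inl_inr]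
    exact hw
  rw [Matrix.fromBlocks_mulVec] at hw'
  have eq1 : PhiMat G H ψ *ᵥ x + C *ᵥ y = 0 := by
    funext e
    exact congrFun hw' (Sum.inl e)
  have eq2 : Cᵀ *ᵥ x = 0 := by
    funext i
    have := congrFun hw' (Sum.inr i)
    simpa using this
  have hxr : x ∈ LinearMap.range G.cob.mulVecLin := by
    apply mem_range_of_dot
    intro z hz
    have hzmem : z ∈ G.cycleSpace := by
      rw [OrientedGraph.cycleSpace, LinearMap.mem_ker, Matrix.mulVecLin_apply]
      exact hz
    rw [← hC.2] at hzmem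
    obtain ⟨u, hu⟩ := hzmem
    rw [← hu, Matrix.mulVecLin_apply, dotProduct_comm, Matrix.dotProduct_mulVec,
      ← Matrix.mulVec_transpose, eq2, zero_dotProduct]
  obtain ⟨θ, hθ⟩ := hxr
  rw [Matrix.mulVecLin_apply] at hθ
  have hBtC : G.cobᵀ *ᵥ (C *ᵥ y) = 0 := by
    have hmem : C *ᵥ y ∈ G.cycleSpace := by
      rw [← hC.2]
      exact ⟨y, rfl⟩
    rw [OrientedGraph.cycleSpace, LinearMap.mem_ker] at hmem
    rw [← Matrix.mulVecLin_apply]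
    exact hmem
  have hLap : G.cobᵀ *ᵥ (PhiMat G H ψ *ᵥ (G.cob *ᵥ θ)) = 0 := by
    have h0 := congrArg (fun u => G.cobᵀ *ᵥ u) eq1
    simp only [Matrix.mulVec_add, hBtC, add_zero, Matrix.mulVec_zero] at h0
    rwa [hθ]
  set φ : V → ℝ := fun s => ψ s * θ s with hφdef
  have hφker : φ ∈ LinearMap.ker (H - lam • (1 : Matrix V V ℝ)).mulVecLin := by
    rw [LinearMap.mem_ker]
    funext v
    have h1 := congrFun hLap v
    rw [key_sum G H ψ θ hsymm hsupp v] at h1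
    have hsum : ∑ s, H v s * ψ s = lam * ψ v := by
      have := congrFun heig v
      simpa [Matrix.mulVec, dotProduct] using this
    have h2 : ∑ s, ψ v * H v s * ψ s * (θ s - θ v)
        = ψ v * ((H - lam • (1 : Matrix V V ℝ)).mulVecLin φ v) := by
      calc ∑ s, ψ v * H v s * ψ s * (θ s - θ v)
          = ψ v * (∑ s, H v s * (ψ s * θ s)) - (ψ v * θ v) * (∑ s, H v s * ψ s) := by
            rw [Finset.mul_sum, Finset.mul_sum, ← Finset.sum_sub_distrib]
            exact Finset.sum_congr rfl fun s _ => by ring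
        _ = ψ v * ((H *ᵥ φ) v - lam * φ v) := by
            rw [hsum]
            simp only [Matrix.mulVec, dotProduct, hφdef]
            ring
        _ = ψ v * ((H - lam • (1 : Matrix V V ℝ)).mulVecLin φ v) := by
            rw [Matrix.mulVecLin_apply, Matrix.sub_mulVec, Matrix.smul_mulVec,
              Matrix.one_mulVec]
            simp
    rw [h2] at h1
    have := (mul_eq_zero.mp h1).resolve_left (hψ v)
    simpa using this
  rw [← hkereq, Submodule.mem_span_singleton] at hφker
  obtain ⟨c, hc⟩ := hφker
  have hθc : ∀ v, θ v = c := by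
    intro v
    have h3 := congrFun hc v
    have h4 : ψ v * c = ψ v * θ v := by
      simpa [hφdef, mul_comm] using h3
    exact (mul_left_cancel₀ (hψ v) h4).symm
  have hcobθ : G.cob *ᵥ θ = 0 := by
    funext e
    rw [cob_mulVec, hθc, hθc, sub_self]
    rfl
  have hx0 : x = 0 := by rw [← hθ, hcobθ]
  have hy0 : y = 0 := by
    have hCy : C *ᵥ y = 0 := by
      rw [hx0] at eq1
      simpa using eq1
    have hmem : y ∈ LinearMap.ker C.mulVecLin := by
      rw [LinearMap.mem_ker, Matrix.mulVecLin_apply]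
      exact hCy
    rw [hC.1] at hmem
    simpa using hmem
  funext i
  cases i with
  | inl e => exact congrFun hx0 e
  | inr j => exact congrFun hy0 j
end

section
/- (Directional magnetic Hessian of a simple eigenvalue.) Let H be a real symmetric n×n matrix strictly supported on the connected graph G, let λ ∈ ℝ and ψ ∈ ℝ^V satisfy Hψ = λψ with ‖ψ‖ = 1, dim ker(H − λI) = 1, and ψ_r ≠ 0 for every vertex r. Let α ∈ ℝ^E with Φα ∈ Z = ker(d^⊤). Suppose μ:(−ε,ε)→ℝ and v:(−ε,ε)→ℂ^V are twice differentiable with H_{tα} v(t) = μ(t) v(t) for all t, μ(0) = λ, and v(0) = ψ. Then μ'(0) = 0 and μ''(0) = 2 α^⊤ Φ α. -/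
open Matrix

set_option linter.unusedSectionVars false
section Helpers

variable {V E : Type*} [Fintype V] [Fintype E] [DecidableEq V] [DecidableEq E]
variable (G : OrientedGraph V E)

lemma alphaExt_smul (α : E → ℝ) (t : ℝ) (r s : V) :
    alphaExt G (t • α) r s = t * alphaExt G α r s := by
  simp [alphaExt, Finset.mul_sum, mul_sub, mul_ite]

lemma alphaExt_antisymm (α : E → ℝ) (r s : V) :
    alphaExt G α r s = - alphaExt G α s r := by
  unfold alphaExt
  rw [← Finset.sum_neg_distrib]
  exact Finset.sum_congr rfl fun e _ => by ring

lemma alphaExt_self (α : E → ℝ) (r : V) : alphaExt G α r r = 0 := by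
  simp [alphaExt]

lemma alphaExt_src_tgt (α : E → ℝ) (e : E) :
    alphaExt G α (G.src e) (G.tgt e) = α e := by
  unfold alphaExt
  have key : ∀ f : E,
      ((if G.src f = G.src e ∧ G.tgt f = G.tgt e then α f else 0) -
        (if G.src f = G.tgt e ∧ G.tgt f = G.src e then α f else 0))
      = if f = e then α f else 0 := by
    intro f
    rcases eq_or_ne f e with h | h
    · subst h
      have h2 : ¬ (G.src f = G.tgt f ∧ G.tgt f = G.src f) := fun hc => G.loopless f hc.1
      simp [h2]
    · rw [if_neg (fun hc => h (G.edgeInj f e (Or.inl hc))),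
        if_neg (fun hc => h (G.edgeInj f e (Or.inr hc))), if_neg h, sub_zero]
  rw [Finset.sum_congr rfl fun f _ => key f, Finset.sum_ite_eq' Finset.univ e α,
    if_pos (Finset.mem_univ e)]

/-- Collapse a sum against `alphaExt` at a fixed first vertex. -/
lemma sum_alphaExt_single (α : E → ℝ) (r : V) (F : V → ℝ) :
    ∑ s, alphaExt G α r s * F s =
      ∑ e, α e * ((if G.src e = r then F (G.tgt e) else 0) -
        (if G.tgt e = r then F (G.src e) else 0)) := by
  unfold alphaExt
  simp only [Finset.sum_mul, sub_mul, ite_mul, zero_mul]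
  rw [Finset.sum_comm]
  refine Finset.sum_congr rfl fun e _ => ?_
  rw [Finset.sum_sub_distrib]
  by_cases h1 : G.src e = r <;> by_cases h2 : G.tgt e = r
  · exact absurd (h1.trans h2.symm) (G.loopless e)
  · simp [h1, h2, Finset.sum_ite_eq, mul_comm]
  · simp [h1, h2, Finset.sum_ite_eq, mul_comm]
  · simp [h1, h2]

/-- Collapse a double sum against `alphaExt`. -/
lemma sum_alphaExt_double (α : E → ℝ) (F : V → V → ℝ) :
    ∑ r, ∑ s, alphaExt G α r s * F r s =
      ∑ e, α e * (F (G.src e) (G.tgt e) - F (G.tgt e) (G.src e)) := by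
  have : ∀ r, ∑ s, alphaExt G α r s * F r s =
      ∑ e, α e * ((if G.src e = r then F r (G.tgt e) else 0) -
        (if G.tgt e = r then F r (G.src e) else 0)) :=
    fun r => sum_alphaExt_single G α r (F r)
  rw [Finset.sum_congr rfl fun r _ => this r, Finset.sum_comm]
  refine Finset.sum_congr rfl fun e _ => ?_
  simp only [mul_sub, Finset.sum_sub_distrib, mul_ite, mul_zero]
  congr 1
  · rw [Finset.sum_ite_eq Finset.univ (G.src e) fun r => α e * F r (G.tgt e),
      if_pos (Finset.mem_univ _)]
  · rw [Finset.sum_ite_eq Finset.univ (G.tgt e) fun r => α e * F r (G.src e),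
      if_pos (Finset.mem_univ _)]

lemma cycle_w_zero (H : Matrix V V ℝ) (hsymm : H.IsSymm) (ψ : V → ℝ) (hψ : ∀ r, ψ r ≠ 0)
    (α : E → ℝ) (hα : (PhiMat G H ψ).mulVec α ∈ G.cycleSpace) (r : V) :
    ∑ s, alphaExt G α r s * (H r s * ψ s) = 0 := by
  simp only [OrientedGraph.cycleSpace, LinearMap.mem_ker, Matrix.mulVecLin_apply] at hα
  have hΦ : (PhiMat G H ψ).mulVec α =
      fun e => -(ψ (G.src e) * H (G.src e) (G.tgt e) * ψ (G.tgt e)) * α e := by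
    ext e; simp [PhiMat, Matrix.mulVec_diagonal]
  rw [hΦ] at hα
  have hc := congrFun hα r
  simp only [Matrix.mulVec, dotProduct, Matrix.transpose_apply, OrientedGraph.cob,
    Matrix.of_apply, Pi.zero_apply] at hc
  rw [sum_alphaExt_single]
  have key : ∀ e, ψ r * (α e * ((if G.src e = r then H r (G.tgt e) * ψ (G.tgt e) else 0) -
      (if G.tgt e = r then H r (G.src e) * ψ (G.src e) else 0)))
      = ((if G.tgt e = r then (1:ℝ) else 0) - (if G.src e = r then 1 else 0)) *
        (-(ψ (G.src e) * H (G.src e) (G.tgt e) * ψ (G.tgt e)) * α e) := by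
    intro e
    by_cases h1 : G.src e = r <;> by_cases h2 : G.tgt e = r
    · exact absurd (h1.trans h2.symm) (G.loopless e)
    · subst h1; simp [h2]; ring
    · subst h2; simp [h1, hsymm.apply (G.src e) (G.tgt e)]; ring
    · simp [h1, h2]
  have hmul : ψ r * ∑ e, α e * ((if G.src e = r then H r (G.tgt e) * ψ (G.tgt e) else 0) -
      (if G.tgt e = r then H r (G.src e) * ψ (G.src e) else 0)) = 0 := by
    rw [Finset.mul_sum, Finset.sum_congr rfl fun e _ => key e]
    exact hc
  exact (mul_eq_zero.mp hmul).resolve_left (hψ r)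

lemma sum_alphaExt_sq (H : Matrix V V ℝ) (hsymm : H.IsSymm) (ψ : V → ℝ) (α : E → ℝ) :
    ∑ r, ∑ s, alphaExt G α r s * (ψ r * (alphaExt G α r s * H r s * ψ s))
      = -2 * (α ⬝ᵥ (PhiMat G H ψ).mulVec α) := by
  rw [sum_alphaExt_double]
  simp only [dotProduct, PhiMat, Matrix.mulVec_diagonal, Finset.mul_sum]
  refine Finset.sum_congr rfl fun e _ => ?_
  rw [alphaExt_src_tgt, alphaExt_antisymm G α (G.tgt e) (G.src e), alphaExt_src_tgt,
    hsymm.apply (G.src e) (G.tgt e)]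
  ring

lemma hasDerivAt_cexp_piece (c : ℂ) (b : ℝ) (w : ℝ → ℂ) (w' : ℂ) (t : ℝ)
    (hw : HasDerivAt w w' t) :
    HasDerivAt (fun u : ℝ => c * Complex.exp (Complex.I * ((u * b : ℝ) : ℂ)) * w u)
      (c * (Complex.I * (b : ℂ)) * Complex.exp (Complex.I * ((t * b : ℝ) : ℂ)) * w t
        + c * Complex.exp (Complex.I * ((t * b : ℝ) : ℂ)) * w') t := by
  have h := ((((hasDerivAt_mul_const b).ofReal_comp).const_mul Complex.I).cexp.const_mul c).fun_mul hw
  exact h.congr_deriv (by ring)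
end Helpers

/-- directional magnetic Hessian of a simple eigenvalue:
if `Φα ∈ Z` then `μ'(0) = 0` and `μ''(0) = 2 αᵀ Φ α`. -/
theorem directional_magnetic_hessian
    {V E : Type*} [Fintype V] [Fintype E] [DecidableEq V] [DecidableEq E]
    (G : OrientedGraph V E) (hconn : G.toSimpleGraph.Connected)
    (H : Matrix V V ℝ) (hsymm : H.IsSymm) (hsupp : G.StrictSupport H)
    (lam : ℝ) (ψ : V → ℝ) (heig : H.mulVec ψ = lam • ψ)
    (hnorm : ψ ⬝ᵥ ψ = 1)
    (hker : Module.finrank ℝ (LinearMap.ker (H - lam • (1 : Matrix V V ℝ)).mulVecLin) = 1)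
    (hψ : ∀ r, ψ r ≠ 0)
    (α : E → ℝ) (hα : (PhiMat G H ψ).mulVec α ∈ G.cycleSpace)
    (ε : ℝ) (hε : 0 < ε) (μ : ℝ → ℝ) (v : ℝ → V → ℂ)
    (heigt : ∀ t ∈ Set.Ioo (-ε) ε,
      (phaseMat G H (t • α)).mulVec (v t) = μ t • v t)
    (hμ0 : μ 0 = lam) (hv0 : v 0 = fun r => (ψ r : ℂ))
    (hμd : ∀ t ∈ Set.Ioo (-ε) ε, DifferentiableAt ℝ μ t)
    (hμd2 : ∀ t ∈ Set.Ioo (-ε) ε, DifferentiableAt ℝ (deriv μ) t)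
    (hvd : ∀ t ∈ Set.Ioo (-ε) ε, DifferentiableAt ℝ v t)
    (hvd2 : ∀ t ∈ Set.Ioo (-ε) ε, DifferentiableAt ℝ (deriv v) t) :
    deriv μ 0 = 0 ∧ deriv (deriv μ) 0 = 2 * (α ⬝ᵥ (PhiMat G H ψ).mulVec α) := by
  classical
  have h00 : (0:ℝ) ∈ Set.Ioo (-ε) ε := ⟨neg_lt_zero.mpr hε, hε⟩
  set a : V → V → ℝ := alphaExt G α with haa
  set X : ℝ := α ⬝ᵥ (PhiMat G H ψ).mulVec α with hXd
  -- real identities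
  have hw : ∀ r, ∑ s, a r s * (H r s * ψ s) = 0 := cycle_w_zero G H hsymm ψ hψ α hα
  have hS : ∑ r, ∑ s, a r s * (ψ r * (a r s * H r s * ψ s)) = -2 * X :=
    sum_alphaExt_sq G H hsymm ψ α
  have hleft : ∀ s, ∑ r, ψ r * H r s = lam * ψ s := by
    intro s
    have h1 := congrFun heig s
    simp only [Matrix.mulVec, dotProduct, Pi.smul_apply, smul_eq_mul] at h1
    rw [← h1]
    exact Finset.sum_congr rfl fun r _ => by rw [hsymm.apply s r]; ring
  -- complex versions
  have hwC : ∀ r, ∑ s, (ψ r : ℂ) * (H r s : ℂ) * (Complex.I * (a r s : ℂ)) * (ψ s : ℂ) = 0 := by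
    intro r
    have h1 : ∑ s, (ψ r : ℂ) * (H r s : ℂ) * (Complex.I * (a r s : ℂ)) * (ψ s : ℂ)
        = (Complex.I * (ψ r : ℂ)) * ∑ s, ((a r s * (H r s * ψ s) : ℝ) : ℂ) := by
      rw [Finset.mul_sum]
      exact Finset.sum_congr rfl fun s _ => by push_cast; ring
    rw [h1, ← Complex.ofReal_sum, hw r]
    simp
  have hwC' : ∀ s, ∑ r, (ψ r : ℂ) * (H r s : ℂ) * (Complex.I * (a r s : ℂ)) = 0 := by
    intro s
    have h1 : ∑ r, (ψ r : ℂ) * (H r s : ℂ) * (Complex.I * (a r s : ℂ))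
        = (-Complex.I) * ∑ r, ((a s r * (H s r * ψ r) : ℝ) : ℂ) := by
      rw [Finset.mul_sum]
      refine Finset.sum_congr rfl fun r _ => ?_
      have h2 : a r s = -(a s r) := alphaExt_antisymm G α r s
      have h3 : H r s = H s r := hsymm.apply s r
      rw [h2, h3]; push_cast; ring
    rw [h1, ← Complex.ofReal_sum, hw s]
    simp
  have hCl : ∀ s, ∑ r, (ψ r : ℂ) * (H r s : ℂ) = (lam : ℂ) * (ψ s : ℂ) := by
    intro s
    calc ∑ r, (ψ r : ℂ) * (H r s : ℂ) = ((∑ r, ψ r * H r s : ℝ) : ℂ) := by push_cast; rfl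
      _ = ((lam * ψ s : ℝ) : ℂ) := by rw [hleft s]
      _ = (lam : ℂ) * (ψ s : ℂ) := by push_cast; rfl
  have hψψ : ∑ s, (ψ s : ℂ) * (ψ s : ℂ) = 1 := by
    have h1 : ∑ s, ψ s * ψ s = 1 := by simpa [dotProduct] using hnorm
    calc ∑ s, (ψ s : ℂ) * (ψ s : ℂ) = ((∑ s, ψ s * ψ s : ℝ) : ℂ) := by push_cast; rfl
      _ = 1 := by rw [h1]; norm_num
  -- the function g and its derivative g1
  set v1 : ℝ → V → ℂ := deriv v with hv1d
  set μ1 : ℝ → ℝ := deriv μ with hμ1d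
  set g : ℝ → ℂ := fun t =>
      (∑ r, ∑ s, (ψ r : ℂ) * (H r s : ℂ) *
          Complex.exp (Complex.I * ((t * a r s : ℝ) : ℂ)) * v t s)
      - (μ t : ℂ) * ∑ s, (ψ s : ℂ) * v t s with hgdef
  set g1 : ℝ → ℂ := fun t =>
      (∑ r, ∑ s, ((ψ r : ℂ) * (H r s : ℂ) * (Complex.I * (a r s : ℂ)) *
            Complex.exp (Complex.I * ((t * a r s : ℝ) : ℂ)) * v t s
          + (ψ r : ℂ) * (H r s : ℂ) *
            Complex.exp (Complex.I * ((t * a r s : ℝ) : ℂ)) * v1 t s))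
      - ((μ1 t : ℂ) * ∑ s, (ψ s : ℂ) * v t s + (μ t : ℂ) * ∑ s, (ψ s : ℂ) * v1 t s) with hg1def
  have hvt : ∀ t ∈ Set.Ioo (-ε) ε, ∀ s, HasDerivAt (fun u => v u s) (v1 t s) t :=
    fun t ht s => hasDerivAt_pi.1 (hvd t ht).hasDerivAt s
  have hgderiv : ∀ t ∈ Set.Ioo (-ε) ε, HasDerivAt g (g1 t) t := by
    intro t ht
    rw [hgdef, hg1def]
    refine HasDerivAt.sub (HasDerivAt.fun_sum fun r _ => HasDerivAt.fun_sum fun s _ =>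
      hasDerivAt_cexp_piece _ _ _ _ t (hvt t ht s)) ?_
    exact ((hμd t ht).hasDerivAt.ofReal_comp).mul
      (HasDerivAt.fun_sum fun s _ => (hvt t ht s).const_mul _)
  have hpm : ∀ (t : ℝ) (r s : V), phaseMat G H (t • α) r s
      = Complex.exp (Complex.I * ((t * a r s : ℝ) : ℂ)) * (H r s : ℂ) := by
    intro t r s
    rcases eq_or_ne r s with h | h
    · subst h
      have h0 : a r r = 0 := alphaExt_self G α r
      simp [phaseMat, h0]
    · have hsm : alphaExt G (t • α) r s = t * a r s := alphaExt_smul G α t r s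
      simp [phaseMat, h, hsm]
  have hgzero : ∀ t ∈ Set.Ioo (-ε) ε, g t = 0 := by
    intro t ht
    have hE := heigt t ht
    have h1 : ∑ r, (ψ r : ℂ) * ((phaseMat G H (t • α)).mulVec (v t) r)
        = ∑ r, ∑ s, (ψ r : ℂ) * (H r s : ℂ) *
            Complex.exp (Complex.I * ((t * a r s : ℝ) : ℂ)) * v t s := by
      refine Finset.sum_congr rfl fun r _ => ?_
      simp only [Matrix.mulVec, dotProduct]
      rw [Finset.mul_sum]
      refine Finset.sum_congr rfl fun s _ => ?_
      rw [hpm t r s]; ring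
    have h2 : ∑ s, (ψ s : ℂ) * ((μ t • v t) s) = (μ t : ℂ) * ∑ s, (ψ s : ℂ) * v t s := by
      rw [Finset.mul_sum]
      refine Finset.sum_congr rfl fun s _ => ?_
      simp only [Pi.smul_apply, Complex.real_smul]; ring
    simp only [hgdef]
    rw [← h1, ← h2, hE, sub_self]
  have hg1zero : ∀ t ∈ Set.Ioo (-ε) ε, g1 t = 0 := by
    intro t ht
    have hev : g =ᶠ[nhds t] fun _ => 0 :=
      Filter.eventuallyEq_of_mem (Ioo_mem_nhds ht.1 ht.2) fun x hx => hgzero x hx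
    exact (hgderiv t ht).unique ((hasDerivAt_const t (0:ℂ)).congr_of_eventuallyEq hev)
  -- first derivative at 0
  have hg10 := hg1zero 0 h00
  rw [hg1def] at hg10
  simp only [zero_mul, Complex.ofReal_zero, mul_zero, Complex.exp_zero, mul_one,
    hv0, hμ0, hψψ] at hg10
  have hsum1 : ∑ r, ∑ s, ((ψ r : ℂ) * (H r s : ℂ) * (Complex.I * (a r s : ℂ)) * (ψ s : ℂ)
      + (ψ r : ℂ) * (H r s : ℂ) * v1 0 s)
      = (lam : ℂ) * ∑ s, (ψ s : ℂ) * v1 0 s := by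
    simp only [Finset.sum_add_distrib]
    rw [Finset.sum_congr rfl fun r _ => hwC r, Finset.sum_const_zero, zero_add,
      Finset.sum_comm, Finset.mul_sum]
    refine Finset.sum_congr rfl fun s _ => ?_
    rw [← Finset.sum_mul, hCl s, mul_assoc]
  rw [hsum1] at hg10
  have hμ10 : μ1 0 = 0 := by
    have hc : ((μ1 0 : ℝ) : ℂ) = 0 := by linear_combination -hg10
    exact_mod_cast hc
  refine ⟨hμ10, ?_⟩
  -- second derivative at 0
  have hvt1 : ∀ s, HasDerivAt (fun u => v1 u s) (deriv v1 0 s) 0 :=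
    fun s => hasDerivAt_pi.1 (hvd2 0 h00).hasDerivAt s
  have hμt1 : HasDerivAt μ1 (deriv μ1 0) 0 := (hμd2 0 h00).hasDerivAt
  have hg1deriv : HasDerivAt g1
      ((∑ r, ∑ s,
        (((ψ r : ℂ) * (H r s : ℂ) * (Complex.I * (a r s : ℂ))) * (Complex.I * (a r s : ℂ)) *
            Complex.exp (Complex.I * (((0:ℝ) * a r s : ℝ) : ℂ)) * v 0 s
          + ((ψ r : ℂ) * (H r s : ℂ) * (Complex.I * (a r s : ℂ))) *
            Complex.exp (Complex.I * (((0:ℝ) * a r s : ℝ) : ℂ)) * v1 0 s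
        + ((ψ r : ℂ) * (H r s : ℂ) * (Complex.I * (a r s : ℂ)) *
            Complex.exp (Complex.I * (((0:ℝ) * a r s : ℝ) : ℂ)) * v1 0 s
          + (ψ r : ℂ) * (H r s : ℂ) *
            Complex.exp (Complex.I * (((0:ℝ) * a r s : ℝ) : ℂ)) * deriv v1 0 s)))
      - (((deriv μ1 0 : ℝ) : ℂ) * ∑ s, (ψ s : ℂ) * v 0 s
          + (μ1 0 : ℂ) * ∑ s, (ψ s : ℂ) * v1 0 s
        + ((μ1 0 : ℂ) * ∑ s, (ψ s : ℂ) * v1 0 s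
          + (μ 0 : ℂ) * ∑ s, (ψ s : ℂ) * deriv v1 0 s))) 0 := by
    rw [hg1def]
    refine HasDerivAt.sub (HasDerivAt.fun_sum fun r _ => HasDerivAt.fun_sum fun s _ =>
      HasDerivAt.add (hasDerivAt_cexp_piece _ _ _ _ 0 (hvt 0 h00 s))
        (hasDerivAt_cexp_piece _ _ _ _ 0 (hvt1 s))) ?_
    exact ((hμt1.ofReal_comp).mul (HasDerivAt.fun_sum fun s _ => (hvt 0 h00 s).const_mul _)).add
      (((hμd 0 h00).hasDerivAt.ofReal_comp).mul
        (HasDerivAt.fun_sum fun s _ => (hvt1 s).const_mul _))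
  have hev1 : g1 =ᶠ[nhds 0] fun _ => 0 :=
    Filter.eventuallyEq_of_mem (Ioo_mem_nhds h00.1 h00.2) fun x hx => hg1zero x hx
  have hD2 := hg1deriv.unique ((hasDerivAt_const (0:ℝ) (0:ℂ)).congr_of_eventuallyEq hev1)
  simp only [zero_mul, Complex.ofReal_zero, mul_zero, Complex.exp_zero, mul_one,
    hv0, hμ0, hμ10, hψψ, add_zero, zero_add, Finset.sum_add_distrib] at hD2
  -- sum identities for the second derivative
  have hA : ∑ r, ∑ s, (ψ r : ℂ) * (H r s : ℂ) * (Complex.I * (a r s : ℂ)) *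
        (Complex.I * (a r s : ℂ)) * (ψ s : ℂ) = ((2 * X : ℝ) : ℂ) := by
    have h1 : ∀ r s : V, (ψ r : ℂ) * (H r s : ℂ) * (Complex.I * (a r s : ℂ)) *
          (Complex.I * (a r s : ℂ)) * (ψ s : ℂ)
        = -((a r s * (ψ r * (a r s * H r s * ψ s)) : ℝ) : ℂ) := by
      intro r s; push_cast
      linear_combination ((a r s : ℂ) * (a r s : ℂ) * (ψ r : ℂ) * (H r s : ℂ) * (ψ s : ℂ)) *
        Complex.I_mul_I
    rw [Finset.sum_congr rfl fun r _ => Finset.sum_congr rfl fun s _ => h1 r s]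
    rw [show ∑ r, ∑ s, -((a r s * (ψ r * (a r s * H r s * ψ s)) : ℝ) : ℂ)
        = -(((∑ r, ∑ s, a r s * (ψ r * (a r s * H r s * ψ s)) : ℝ)) : ℂ) by
      simp only [Finset.sum_neg_distrib, Complex.ofReal_sum, Complex.ofReal_mul]]
    rw [hS]; push_cast; ring
  have hBB : ∑ r, ∑ s, (ψ r : ℂ) * (H r s : ℂ) * (Complex.I * (a r s : ℂ)) * v1 0 s = 0 := by
    rw [Finset.sum_comm]
    refine Finset.sum_eq_zero fun s _ => ?_
    rw [← Finset.sum_mul, hwC' s, zero_mul]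
  have hDD : ∑ r, ∑ s, (ψ r : ℂ) * (H r s : ℂ) * deriv v1 0 s
      = (lam : ℂ) * ∑ s, (ψ s : ℂ) * deriv v1 0 s := by
    rw [Finset.sum_comm, Finset.mul_sum]
    refine Finset.sum_congr rfl fun s _ => ?_
    rw [← Finset.sum_mul, hCl s, mul_assoc]
  have hfin : ((deriv μ1 0 : ℝ) : ℂ) = ((2 * X : ℝ) : ℂ) := by
    linear_combination -hD2 + hA + 2 * hBB + hDD
  exact_mod_cast hfin
end

section
/- (Bronski–DeVille–Ferguson index formula.) Let L be a real symmetric n×n matrix strictly supported on the connected graph G whose kernel is spanned by the all-ones vector 𝟏. Let D be the |E|×|E| diagonal matrix with entries D_{(s→t)} = L_{st}, and let C be a frame for the cycle space Z of G. Then n_+(L) = n_-(D) − n_+(−C^⊤ D^{-1} C). -/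
open Matrix

namespace BDFAux

variable {m : Type*} [Fintype m]

/-- The quadratic form of a matrix. -/
def qf (A : Matrix m m ℝ) (x : m → ℝ) : ℝ := x ⬝ᵥ A *ᵥ x

/-- Dimensions of positive subspaces. -/
def posSet (A : Matrix m m ℝ) : Set ℕ :=
  {k | ∃ U : Submodule ℝ (m → ℝ), Module.finrank ℝ U = k ∧ ∀ x ∈ U, x ≠ 0 → 0 < qf A x}

noncomputable def posDim (A : Matrix m m ℝ) : ℕ := sSup (posSet A)

lemma qf_zero (A : Matrix m m ℝ) : qf A 0 = 0 := by simp [qf]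

lemma qf_neg (A : Matrix m m ℝ) (x : m → ℝ) : qf (-A) x = -qf A x := by
  rw [qf, qf, Matrix.neg_mulVec, dotProduct_neg]

lemma zero_mem_posSet (A : Matrix m m ℝ) : 0 ∈ posSet A :=
  ⟨⊥, by simp, by simp⟩

lemma posSet_le (A : Matrix m m ℝ) {k : ℕ} (hk : k ∈ posSet A) : k ≤ Fintype.card m := by
  obtain ⟨U, hU, -⟩ := hk
  have := Submodule.finrank_le U
  rwa [Module.finrank_pi, hU] at this

lemma bddAbove_posSet (A : Matrix m m ℝ) : BddAbove (posSet A) :=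
  ⟨Fintype.card m, fun k hk => posSet_le A hk⟩

lemma posDim_mem (A : Matrix m m ℝ) : posDim A ∈ posSet A :=
  Nat.sSup_mem ⟨0, zero_mem_posSet A⟩ (bddAbove_posSet A)

lemma le_posDim (A : Matrix m m ℝ) {k : ℕ} (hk : k ∈ posSet A) : k ≤ posDim A :=
  le_csSup (bddAbove_posSet A) hk

lemma posDim_le (A : Matrix m m ℝ) {c : ℕ} (h : ∀ k ∈ posSet A, k ≤ c) : posDim A ≤ c :=
  csSup_le ⟨0, zero_mem_posSet A⟩ h

/-- Image of a positive subspace has the same finrank. -/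
lemma finrank_map_eq {a : Type*} [Fintype a] (A : Matrix m m ℝ) (B : Matrix a a ℝ)
    (f : (a → ℝ) →ₗ[ℝ] (m → ℝ)) (U : Submodule ℝ (a → ℝ))
    (hf : ∀ x, qf A (f x) = qf B x) (hpos : ∀ x ∈ U, x ≠ 0 → 0 < qf B x) :
    Module.finrank ℝ (U.map f) = Module.finrank ℝ U := by
  have hker : LinearMap.ker (f.domRestrict U) = ⊥ := by
    rw [LinearMap.ker_eq_bot']
    rintro ⟨x, hx⟩ hfx
    have hfx' : f x = 0 := hfx
    by_contra hne
    have hxne : x ≠ 0 := by intro h0; apply hne; ext; simp [h0]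
    have := hpos x hx hxne
    rw [← hf x, hfx', qf_zero] at this
    exact lt_irrefl 0 this
  have := LinearMap.finrank_range_add_finrank_ker (f.domRestrict U)
  rw [hker, finrank_bot, add_zero, LinearMap.range_domRestrict] at this
  exact this

/-- transfer: if the form of `B` is realized inside the form of `A` via a linear map,
then `posDim B ≤ posDim A`. -/
lemma posDim_le_of_map {a : Type*} [Fintype a] (A : Matrix m m ℝ) (B : Matrix a a ℝ)
    (f : (a → ℝ) →ₗ[ℝ] (m → ℝ)) (hf : ∀ x, qf A (f x) = qf B x) :
    posDim B ≤ posDim A := by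
  apply posDim_le
  intro k hk
  obtain ⟨U, hU, hpos⟩ := hk
  apply le_posDim
  refine ⟨U.map f, ?_, ?_⟩
  · rw [finrank_map_eq A B f U hf hpos, hU]
  · rintro y hy hyne
    obtain ⟨x, hx, rfl⟩ := Submodule.mem_map.1 hy
    have hxne : x ≠ 0 := by rintro rfl; simp at hyne
    rw [hf x]
    exact hpos x hx hxne

/-- Two orthogonally-embedded forms: sum of posDims is at most posDim of the ambient form. -/
lemma add_posDim_le {a b : Type*} [Fintype a] [Fintype b] (A : Matrix m m ℝ)
    (B₁ : Matrix a a ℝ) (B₂ : Matrix b b ℝ)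
    (f : (a → ℝ) →ₗ[ℝ] (m → ℝ)) (g : (b → ℝ) →ₗ[ℝ] (m → ℝ))
    (hf : ∀ x, qf A (f x) = qf B₁ x) (hg : ∀ y, qf A (g y) = qf B₂ y)
    (hc : ∀ x y, f x ⬝ᵥ A *ᵥ g y = 0) (hc' : ∀ x y, g y ⬝ᵥ A *ᵥ f x = 0) :
    posDim B₁ + posDim B₂ ≤ posDim A := by
  obtain ⟨U₁, hU₁, hpos₁⟩ := posDim_mem B₁
  obtain ⟨U₂, hU₂, hpos₂⟩ := posDim_mem B₂
  -- disjointness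
  have hdisj : U₁.map f ⊓ U₂.map g = ⊥ := by
    rw [Submodule.eq_bot_iff]
    rintro z ⟨hz₁, hz₂⟩
    by_contra hzne
    obtain ⟨x, hx, hfx⟩ := Submodule.mem_map.1 hz₁
    obtain ⟨y, hy, hgy⟩ := Submodule.mem_map.1 hz₂
    have h0 : qf A z = 0 := by
      rw [qf]
      nth_rewrite 2 [← hgy]
      rw [← hfx]; exact hc x y
    have hxne : x ≠ 0 := by rintro rfl; rw [map_zero] at hfx; exact hzne hfx.symm
    have := hpos₁ x hx hxne
    rw [← hf x, hfx, h0] at this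
    exact lt_irrefl 0 this
  apply le_posDim
  refine ⟨U₁.map f ⊔ U₂.map g, ?_, ?_⟩
  · have hsum := Submodule.finrank_sup_add_finrank_inf_eq (U₁.map f) (U₂.map g)
    rw [hdisj, finrank_bot, add_zero] at hsum
    rw [hsum, finrank_map_eq A B₁ f U₁ hf hpos₁, finrank_map_eq A B₂ g U₂ hg hpos₂, hU₁, hU₂]
  · intro z hz hzne
    obtain ⟨z₁, hz₁, z₂, hz₂, rfl⟩ := Submodule.mem_sup.1 hz
    obtain ⟨x, hx, rfl⟩ := Submodule.mem_map.1 hz₁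
    obtain ⟨y, hy, rfl⟩ := Submodule.mem_map.1 hz₂
    have hexp : qf A (f x + g y) = qf B₁ x + qf B₂ y := by
      rw [qf, Matrix.mulVec_add, dotProduct_add, add_dotProduct,
        add_dotProduct, hc x y, hc' x y, ← qf, ← qf, hf, hg]
      ring
    rw [hexp]
    rcases eq_or_ne x 0 with rfl | hxne
    · have hyne : y ≠ 0 := by
        rintro rfl; rw [map_zero, map_zero, add_zero] at hzne; exact hzne rfl
      have h₂ := hpos₂ y hy hyne
      rw [qf_zero, zero_add]; exact h₂
    · have h₁ := hpos₁ x hx hxne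
      rcases eq_or_ne y 0 with rfl | hyne
      · rw [qf_zero, add_zero]; exact h₁
      · have h₂ := hpos₂ y hy hyne
        linarith

variable [DecidableEq m]

/-- coordinate subspace -/
noncomputable def coordSub (p : m → Prop) [DecidablePred p] : Submodule ℝ (m → ℝ) :=
  LinearMap.ker (LinearMap.funLeft ℝ ℝ (Subtype.val : {i // ¬ p i} → m))

lemma mem_coordSub (p : m → Prop) [DecidablePred p] (x : m → ℝ) :
    x ∈ coordSub p ↔ ∀ i, ¬ p i → x i = 0 := by
  rw [coordSub, LinearMap.mem_ker]
  constructor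
  · intro h i hi
    exact congrFun h ⟨i, hi⟩
  · intro h; funext i; exact h i.1 i.2

lemma finrank_coordSub (p : m → Prop) [DecidablePred p] :
    Module.finrank ℝ (coordSub p) = Fintype.card {i // p i} := by
  have hsurj : Function.Surjective (LinearMap.funLeft ℝ ℝ (Subtype.val : {i // ¬ p i} → m)) :=
    LinearMap.funLeft_surjective_of_injective ℝ ℝ _ Subtype.val_injective
  have := LinearMap.finrank_range_add_finrank_ker
    (LinearMap.funLeft ℝ ℝ (Subtype.val : {i // ¬ p i} → m))
  rw [LinearMap.range_eq_top.2 hsurj, finrank_top, Module.finrank_pi, Module.finrank_pi] at this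
  have hcard : Fintype.card {i // ¬ p i} + Fintype.card {i // p i} = Fintype.card m := by
    rw [Fintype.card_subtype_compl]
    have := Fintype.card_subtype_le p
    omega
  rw [coordSub]
  omega

lemma qf_diagonal (d : m → ℝ) (x : m → ℝ) :
    qf (diagonal d) x = ∑ i, d i * (x i * x i) := by
  rw [qf, dotProduct]
  refine Finset.sum_congr rfl fun i _ => ?_
  rw [mulVec_diagonal]
  ring

/-- positive and nonpositive subspaces intersect trivially; their finranks add up to
at most `card m`. -/
lemma finrank_add_finrank_le (A : Matrix m m ℝ) (U U' : Submodule ℝ (m → ℝ))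
    (hU : ∀ x ∈ U, x ≠ 0 → 0 < qf A x) (hU' : ∀ x ∈ U', qf A x ≤ 0) :
    Module.finrank ℝ U + Module.finrank ℝ U' ≤ Fintype.card m := by
  have hdisj : U ⊓ U' = ⊥ := by
    rw [Submodule.eq_bot_iff]
    rintro x ⟨hx, hx'⟩
    by_contra hxne
    exact absurd (hU' x hx') (not_le.2 (hU x hx hxne))
  have hsum := Submodule.finrank_sup_add_finrank_inf_eq U U'
  rw [hdisj, finrank_bot, add_zero] at hsum
  rw [← hsum]
  have := Submodule.finrank_le (U ⊔ U')
  rwa [Module.finrank_pi] at this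

lemma posDim_diagonal (d : m → ℝ) [DecidablePred fun i => (0:ℝ) < d i] :
    posDim (diagonal d) = Fintype.card {i // 0 < d i} := by
  classical
  apply le_antisymm
  · apply posDim_le
    intro k hk
    obtain ⟨U, hU, hpos⟩ := hk
    have hle := finrank_add_finrank_le (diagonal d) U (coordSub fun i => ¬ (0:ℝ) < d i)
      hpos ?_
    · rw [hU, finrank_coordSub] at hle
      have : Fintype.card {i // ¬ (0:ℝ) < d i} + Fintype.card {i // (0:ℝ) < d i}
          = Fintype.card m := by
        rw [Fintype.card_subtype_compl]
        have := Fintype.card_subtype_le fun i => (0:ℝ) < d i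
        omega
      omega
    · intro x hx
      rw [qf_diagonal]
      apply Finset.sum_nonpos
      intro i _
      rcases (em ((0:ℝ) < d i)) with hdi | hdi
      · rw [(mem_coordSub _ x).1 hx i (by simpa using hdi)]
        simp
      · have h1 : d i ≤ 0 := le_of_not_gt hdi
        have h2 : (0:ℝ) ≤ x i * x i := mul_self_nonneg _
        exact mul_nonpos_of_nonpos_of_nonneg h1 h2
  · apply le_posDim
    refine ⟨coordSub fun i => (0:ℝ) < d i, finrank_coordSub _, ?_⟩
    intro x hx hxne
    rw [qf_diagonal]
    have hmem := (mem_coordSub _ x).1 hx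
    obtain ⟨j, hj⟩ : ∃ j, x j ≠ 0 := by
      by_contra h
      push_neg at h
      exact hxne (funext h)
    have hdj : 0 < d j := by
      by_contra h
      exact hj (hmem j h)
    apply Finset.sum_pos'
    · intro i _
      rcases em ((0:ℝ) < d i) with hdi | hdi
      · exact mul_nonneg hdi.le (mul_self_nonneg _)
      · rw [hmem i hdi]; simp
    · exact ⟨j, Finset.mem_univ j, mul_pos hdj (mul_self_pos.2 hj)⟩

lemma dot_mulVec_left {a b : Type*} [Fintype a] [Fintype b] (A : Matrix a b ℝ)
    (x : b → ℝ) (y : a → ℝ) : (A *ᵥ x) ⬝ᵥ y = x ⬝ᵥ (Aᵀ *ᵥ y) := by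
  rw [Matrix.dotProduct_mulVec, Matrix.vecMul_transpose]

lemma qf_congr {a : Type*} [Fintype a] (B : Matrix m m ℝ) (P : Matrix m a ℝ) (x : a → ℝ) :
    qf B (P *ᵥ x) = qf (Pᵀ * B * P) x := by
  rw [qf, qf, ← Matrix.mulVec_mulVec, ← Matrix.mulVec_mulVec, ← dot_mulVec_left]

lemma posDim_congr (B : Matrix m m ℝ) (P : Matrix m m ℝ) (hP : IsUnit P.det) :
    posDim (Pᵀ * B * P) = posDim B := by
  apply le_antisymm
  · apply posDim_le_of_map B (Pᵀ * B * P) P.mulVecLin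
    intro x
    rw [Matrix.mulVecLin_apply, qf_congr]
  · apply posDim_le_of_map (Pᵀ * B * P) B (P⁻¹).mulVecLin
    intro x
    rw [Matrix.mulVecLin_apply, qf_congr]
    congr 1
    rw [Matrix.transpose_nonsing_inv]
    calc (Pᵀ)⁻¹ * (Pᵀ * B * P) * P⁻¹ = (Pᵀ)⁻¹ * Pᵀ * B * (P * P⁻¹) := by
          noncomm_ring
      _ = B := by
          rw [Matrix.nonsing_inv_mul _ (by rwa [Matrix.det_transpose]),
            Matrix.mul_nonsing_inv _ hP, one_mul, mul_one]

lemma posDim_unitary_conj (B : Matrix m m ℝ) (U : Matrix m m ℝ)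
    (hU : U ∈ Matrix.unitaryGroup m ℝ) :
    posDim (U * B * star U) = posDim B := by
  have hstar : star U = Uᵀ := by
    rw [Matrix.star_eq_conjTranspose, Matrix.conjTranspose_eq_transpose_of_trivial]
  have hdet : IsUnit (Uᵀ).det := by
    rw [Matrix.det_transpose]
    have h1 : U * star U = 1 := (Matrix.mem_unitaryGroup_iff).1 hU
    have := congrArg Matrix.det h1
    rw [Matrix.det_mul, Matrix.det_one] at this
    exact IsUnit.of_mul_eq_one _ this
  have : U * B * star U = (Uᵀ)ᵀ * B * Uᵀ := by
    rw [hstar, Matrix.transpose_transpose]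
  rw [this, posDim_congr B Uᵀ hdet]

lemma posDim_eq_card_pos_eigen {A : Matrix m m ℝ} (hA : A.IsHermitian) :
    posDim A = Fintype.card {i // 0 < hA.eigenvalues i} := by
  classical
  have hsp := hA.spectral_theorem
  have hdg : Matrix.diagonal (RCLike.ofReal ∘ hA.eigenvalues) = Matrix.diagonal hA.eigenvalues := by
    congr 1
  rw [hdg, Unitary.conjStarAlgAut_apply] at hsp
  calc posDim A
      = posDim ((hA.eigenvectorUnitary : Matrix m m ℝ) * Matrix.diagonal hA.eigenvalues
          * star (hA.eigenvectorUnitary : Matrix m m ℝ)) := by rw [← hsp]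
    _ = posDim (Matrix.diagonal hA.eigenvalues) :=
        posDim_unitary_conj _ _ (hA.eigenvectorUnitary).2
    _ = Fintype.card {i // 0 < hA.eigenvalues i} := posDim_diagonal _

lemma posDim_neg_eq_card_neg_eigen {A : Matrix m m ℝ} (hA : A.IsHermitian) :
    posDim (-A) = Fintype.card {i // hA.eigenvalues i < 0} := by
  classical
  have hsp := hA.spectral_theorem
  have hdg : Matrix.diagonal (RCLike.ofReal ∘ hA.eigenvalues) = Matrix.diagonal hA.eigenvalues := by
    congr 1
  rw [hdg, Unitary.conjStarAlgAut_apply] at hsp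
  have hneg : -A = (hA.eigenvectorUnitary : Matrix m m ℝ) * Matrix.diagonal (-hA.eigenvalues)
      * star (hA.eigenvectorUnitary : Matrix m m ℝ) := by
    have hd2 : Matrix.diagonal (-hA.eigenvalues) = -Matrix.diagonal hA.eigenvalues := by
      rw [show -hA.eigenvalues = (fun i => -hA.eigenvalues i) from rfl, Matrix.diagonal_neg]
    rw [hd2]
    conv_lhs => rw [hsp]
    noncomm_ring
  rw [hneg, posDim_unitary_conj _ _ (hA.eigenvectorUnitary).2, posDim_diagonal]
  apply Fintype.card_congr
  apply Equiv.subtypeEquivRight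
  intro i
  simp only [Pi.neg_apply]
  exact neg_pos

lemma posDim_add_posDim_neg {A : Matrix m m ℝ} (hA : A.IsHermitian) :
    posDim A + posDim (-A) = A.rank := by
  classical
  rw [posDim_eq_card_pos_eigen hA, posDim_neg_eq_card_neg_eigen hA,
    hA.rank_eq_card_non_zero_eigs, Fintype.card_subtype, Fintype.card_subtype,
    Fintype.card_subtype]
  have hsplit : Finset.filter (fun i => hA.eigenvalues i ≠ 0) Finset.univ
      = Finset.filter (fun i => 0 < hA.eigenvalues i) Finset.univ
        ∪ Finset.filter (fun i => hA.eigenvalues i < 0) Finset.univ := by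
    rw [← Finset.filter_or]
    apply Finset.filter_congr
    intro i _
    constructor
    · intro h; rcases lt_or_gt_of_ne h with h' | h'
      · exact Or.inr h'
      · exact Or.inl h'
    · rintro (h | h) <;> [exact ne_of_gt h; exact ne_of_lt h]
  rw [hsplit, Finset.card_union_of_disjoint]
  rw [Finset.disjoint_filter]
  intro i _ h1
  exact not_lt.2 (le_of_lt h1)

/-- `posEig` agrees with `posDim` for hermitian matrices. -/
lemma posEig_eq_posDim {A : Matrix m m ℝ} (hA : A.IsHermitian) :
    posEig A = posDim A := by
  rw [posEig, dif_pos hA, posDim_eq_card_pos_eigen hA, Nat.card_eq_fintype_card]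

lemma negEig_eq_posDim_neg {A : Matrix m m ℝ} (hA : A.IsHermitian) :
    negEig A = posDim (-A) := by
  rw [negEig, dif_pos hA, posDim_neg_eq_card_neg_eigen hA, Nat.card_eq_fintype_card]

end BDFAux

namespace BDFAux

section Graph

variable {V E : Type*} [Fintype V] [Fintype E] [DecidableEq V] [DecidableEq E]

lemma cob_mulVec (G : OrientedGraph V E) (θ : V → ℝ) (e : E) :
    (G.cob *ᵥ θ) e = θ (G.tgt e) - θ (G.src e) := by
  simp only [OrientedGraph.cob, Matrix.mulVec, dotProduct, Matrix.of_apply, sub_mul,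
    ite_mul, one_mul, zero_mul, Finset.sum_sub_distrib, Finset.sum_ite_eq, Finset.mem_univ,
    if_pos]

lemma cob_mulVec_one (G : OrientedGraph V E) : G.cob *ᵥ (fun _ => (1:ℝ)) = 0 := by
  funext e
  rw [cob_mulVec]
  simp

lemma cob_support (G : OrientedGraph V E) {e : E} {v : V} (h : G.cob e v ≠ 0) :
    G.src e = v ∨ G.tgt e = v := by
  by_contra hc
  push_neg at hc
  apply h
  simp only [OrientedGraph.cob, Matrix.of_apply, if_neg hc.1, if_neg hc.2, sub_zero]

lemma edge_unique (G : OrientedGraph V E) {r s : V} {e e₀ : E} (hrs : r ≠ s)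
    (h1 : G.cob e r ≠ 0) (h2 : G.cob e s ≠ 0)
    (he₀ : (G.src e₀ = r ∧ G.tgt e₀ = s) ∨ (G.src e₀ = s ∧ G.tgt e₀ = r)) : e = e₀ := by
  rcases cob_support G h1 with hr | hr <;> rcases cob_support G h2 with hs | hs
  · exact absurd (hr.symm.trans hs) hrs
  · rcases he₀ with ⟨h3, h4⟩ | ⟨h3, h4⟩
    · exact G.edgeInj e e₀ (Or.inl ⟨hr.trans h3.symm, hs.trans h4.symm⟩)
    · exact G.edgeInj e e₀ (Or.inr ⟨hr.trans h4.symm, hs.trans h3.symm⟩)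
  · rcases he₀ with ⟨h3, h4⟩ | ⟨h3, h4⟩
    · exact G.edgeInj e e₀ (Or.inr ⟨hs.trans h4.symm, hr.trans h3.symm⟩)
    · exact G.edgeInj e e₀ (Or.inl ⟨hs.trans h3.symm, hr.trans h4.symm⟩)
  · exact absurd (hr.symm.trans hs) hrs

lemma adj_of_cob_ne (G : OrientedGraph V E) {r s : V} {e : E} (hrs : r ≠ s)
    (h1 : G.cob e r ≠ 0) (h2 : G.cob e s ≠ 0) : G.toSimpleGraph.Adj r s := by
  rcases cob_support G h1 with hr | hr <;> rcases cob_support G h2 with hs | hs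
  · exact absurd (hr.symm.trans hs) hrs
  · exact ⟨e, Or.inl ⟨hr, hs⟩⟩
  · exact ⟨e, Or.inr ⟨hs, hr⟩⟩
  · exact absurd (hr.symm.trans hs) hrs

lemma ker_cob (G : OrientedGraph V E) (hconn : G.toSimpleGraph.Connected) :
    LinearMap.ker G.cob.mulVecLin = Submodule.span ℝ {(fun _ => 1 : V → ℝ)} := by
  apply le_antisymm
  · intro θ hθ
    have hθ' : G.cob *ᵥ θ = 0 := hθ
    have hstep : ∀ {r s : V}, G.toSimpleGraph.Adj r s → θ r = θ s := by
      rintro r s ⟨e, he⟩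
      have h0 := congrFun hθ' e
      rw [cob_mulVec] at h0
      have h0' : θ (G.tgt e) = θ (G.src e) := by
        have := sub_eq_zero.1 h0
        exact this
      rcases he with ⟨h1, h2⟩ | ⟨h1, h2⟩
      · rw [← h1, ← h2]; exact h0'.symm
      · rw [← h1, ← h2]; exact h0'
    have hwalk : ∀ {a b : V} (_ : G.toSimpleGraph.Walk a b), θ a = θ b := by
      intro a b w
      induction w with
      | nil => rfl
      | cons h _ ih => exact (hstep h).trans ih
    obtain ⟨v₀⟩ := hconn.nonempty
    rw [Submodule.mem_span_singleton]
    refine ⟨θ v₀, funext fun v => ?_⟩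
    obtain ⟨w⟩ := hconn.preconnected v₀ v
    have := hwalk w
    simp only [Pi.smul_apply, smul_eq_mul, mul_one]
    exact this
  · rw [Submodule.span_le, Set.singleton_subset_iff]
    show (fun _ => (1:ℝ)) ∈ LinearMap.ker G.cob.mulVecLin
    rw [LinearMap.mem_ker]
    exact cob_mulVec_one G

/-- The key identity `L = dᵀ D' d`. -/
lemma L_eq_cob (G : OrientedGraph V E) (L : Matrix V V ℝ) (hsymm : L.IsSymm)
    (hsupp : G.StrictSupport L) (hone : L *ᵥ (fun _ => (1:ℝ)) = 0) :
    L = G.cobᵀ * (Matrix.diagonal fun e => -(L (G.src e) (G.tgt e))) * G.cob := by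
  set R := G.cobᵀ * (Matrix.diagonal fun e => -(L (G.src e) (G.tgt e))) * G.cob with hR
  have hentry : ∀ r s, R r s = ∑ e, G.cob e r * (-(L (G.src e) (G.tgt e)) * G.cob e s) := by
    intro r s
    rw [hR, Matrix.mul_assoc, Matrix.mul_apply]
    refine Finset.sum_congr rfl fun e _ => ?_
    rw [Matrix.transpose_apply, Matrix.diagonal_mul]
  have hoff : ∀ r s, r ≠ s → R r s = L r s := by
    intro r s hrs
    rw [hentry]
    by_cases hadj : G.toSimpleGraph.Adj r s
    · obtain ⟨e₀, he₀⟩ := hadj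
      rw [Finset.sum_eq_single e₀]
      · rcases he₀ with ⟨h1, h2⟩ | ⟨h1, h2⟩
        · simp only [OrientedGraph.cob, Matrix.of_apply, h1, h2]
          rw [if_neg (Ne.symm hrs), if_neg hrs]
          norm_num
        · have hsym' : L s r = L r s := by
            have := congrFun (congrFun hsymm r) s
            rwa [Matrix.transpose_apply] at this
          simp only [OrientedGraph.cob, Matrix.of_apply, h1, h2]
          rw [if_neg (Ne.symm hrs), if_neg hrs, hsym']
          norm_num
      · intro e _ hne
        by_contra hne0
        have h1 : G.cob e r ≠ 0 := by
          intro h; apply hne0; rw [h]; ring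
        have h2 : G.cob e s ≠ 0 := by
          intro h; apply hne0; rw [h]; ring
        exact hne (edge_unique G hrs h1 h2 (by tauto))
      · intro h; exact absurd (Finset.mem_univ e₀) h
    · have hL0 : L r s = 0 := by
        by_contra h
        exact hadj ((hsupp r s hrs).1 h)
      rw [hL0]
      apply Finset.sum_eq_zero
      intro e _
      by_contra hne0
      have h1 : G.cob e r ≠ 0 := by
        intro h; apply hne0; rw [h]; ring
      have h2 : G.cob e s ≠ 0 := by
        intro h; apply hne0; rw [h]; ring
      exact hadj (adj_of_cob_ne G hrs h1 h2)
  have hRone : R *ᵥ (fun _ => (1:ℝ)) = 0 := by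
    rw [hR, ← Matrix.mulVec_mulVec, ← Matrix.mulVec_mulVec, cob_mulVec_one,
      Matrix.mulVec_zero, Matrix.mulVec_zero]
  ext r s
  by_cases hrs : r = s
  · subst hrs
    have hsum : ∀ (M : Matrix V V ℝ), M *ᵥ (fun _ => (1:ℝ)) = 0 →
        M r r = -∑ j ∈ Finset.univ.erase r, M r j := by
      intro M hM
      have h0 := congrFun hM r
      have : (M *ᵥ (fun _ => (1:ℝ))) r = ∑ j, M r j := by
        simp [Matrix.mulVec, dotProduct]
      rw [this] at h0
      rw [← Finset.add_sum_erase _ _ (Finset.mem_univ r)] at h0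
      simp only [Pi.zero_apply] at h0
      linarith
    rw [hsum L hone, hsum R hRone]
    congr 1
    apply Finset.sum_congr rfl
    intro j hj
    have hjr : r ≠ j := fun h => (Finset.mem_erase.1 hj).1 h.symm
    exact (hoff r j hjr).symm
  · exact (hoff r s hrs).symm

end Graph

end BDFAux


/-- the Bronski–DeVille–Ferguson index formula
`n₊(L) = n₋(D) - n₊(-Cᵀ D⁻¹ C)`. -/
theorem bronski_deville_ferguson
    {V E : Type*} [Fintype V] [Fintype E] [DecidableEq V] [DecidableEq E]
    (G : OrientedGraph V E) (hconn : G.toSimpleGraph.Connected)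
    (L : Matrix V V ℝ) (hsymm : L.IsSymm) (hsupp : G.StrictSupport L)
    (hker : LinearMap.ker L.mulVecLin = Submodule.span ℝ {(fun _ => 1 : V → ℝ)})
    {β : ℕ} (C : Matrix E (Fin β) ℝ) (hC : IsFrame G C) :
    posEig L +
        posEig (-(Cᵀ * (Matrix.diagonal fun e => L (G.src e) (G.tgt e))⁻¹ * C)) =
      negEig (Matrix.diagonal fun e => L (G.src e) (G.tgt e)) := by
  classical
  open BDFAux in
  obtain ⟨hCker, hCrange⟩ := hC
  set Dd : E → ℝ := fun e => L (G.src e) (G.tgt e) with hDddef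
  have hGadj : ∀ e, G.toSimpleGraph.Adj (G.src e) (G.tgt e) :=
    fun e => ⟨e, Or.inl ⟨rfl, rfl⟩⟩
  have hDd0 : ∀ e, Dd e ≠ 0 := fun e => (hsupp _ _ (G.loopless e)).2 (hGadj e)
  set D' : Matrix E E ℝ := Matrix.diagonal (fun e => -Dd e) with hD'def
  set Q : Matrix E E ℝ := Matrix.diagonal (fun e => -(Dd e)⁻¹) with hQdef
  set N : Matrix (Fin β) (Fin β) ℝ := Cᵀ * Q * C with hNdef
  -- 𝟏 is in the kernel of L
  have hone : L *ᵥ (fun _ => (1:ℝ)) = 0 := by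
    have h1 : (fun _ => (1:ℝ)) ∈ LinearMap.ker L.mulVecLin := by
      rw [hker]; exact Submodule.mem_span_singleton_self _
    exact h1
  -- the key identity L = dᵀ D' d
  have hL : L = G.cobᵀ * D' * G.cob := L_eq_cob G L hsymm hsupp hone
  -- D' and Q are mutually inverse
  have hD'Q : D' * Q = 1 := by
    rw [hD'def, hQdef, Matrix.diagonal_mul_diagonal]
    have h : (fun e => -Dd e * -(Dd e)⁻¹) = fun _ => (1:ℝ) := by
      funext e
      rw [neg_mul_neg, mul_inv_cancel₀ (hDd0 e)]
    rw [h, Matrix.diagonal_one]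
  -- the matrix in the statement is N
  have hDinv : (Matrix.diagonal Dd)⁻¹ = Matrix.diagonal (fun e => (Dd e)⁻¹) := by
    apply Matrix.inv_eq_right_inv
    rw [Matrix.diagonal_mul_diagonal]
    have h : (fun e => Dd e * (Dd e)⁻¹) = fun _ => (1:ℝ) := by
      funext e
      rw [mul_inv_cancel₀ (hDd0 e)]
    rw [h, Matrix.diagonal_one]
  have hNeq : -(Cᵀ * (Matrix.diagonal Dd)⁻¹ * C) = N := by
    rw [hNdef, hDinv]
    have : Q = -(Matrix.diagonal (fun e => (Dd e)⁻¹)) := by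
      rw [hQdef, ← Matrix.diagonal_neg]
    rw [this, Matrix.mul_neg, Matrix.neg_mul]
  -- pointwise pairing identity
  have hpair : ∀ u v : E → ℝ, (D' *ᵥ u) ⬝ᵥ (Q *ᵥ v) = u ⬝ᵥ v := by
    intro u v
    rw [hD'def, hQdef, dotProduct, dotProduct]
    refine Finset.sum_congr rfl fun e _ => ?_
    rw [Matrix.mulVec_diagonal, Matrix.mulVec_diagonal]
    field_simp [hDd0 e]
  -- symmetry facts
  have hQsym : Qᵀ = Q := by rw [hQdef, Matrix.diagonal_transpose]
  have hNsym : Nᵀ = N := by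
    rw [hNdef, Matrix.transpose_mul, Matrix.transpose_mul, Matrix.transpose_transpose, hQsym,
      Matrix.mul_assoc]
  have hLher : L.IsHermitian := by
    rw [Matrix.IsHermitian, Matrix.conjTranspose_eq_transpose_of_trivial]; exact hsymm
  have hNher : N.IsHermitian := by
    rw [Matrix.IsHermitian, Matrix.conjTranspose_eq_transpose_of_trivial]; exact hNsym
  have hDher : (Matrix.diagonal Dd).IsHermitian := Matrix.isHermitian_diagonal _
  -- the two embeddings
  set f : (V → ℝ) →ₗ[ℝ] (E → ℝ) := (D' * G.cob).mulVecLin with hfdef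
  set g : (Fin β → ℝ) →ₗ[ℝ] (E → ℝ) := C.mulVecLin with hgdef
  have hfx : ∀ x, f x = D' *ᵥ (G.cob *ᵥ x) := by
    intro x
    rw [hfdef, Matrix.mulVecLin_apply, Matrix.mulVec_mulVec]
  have hgx : ∀ y, g y = C *ᵥ y := fun y => rfl
  have hqfL : ∀ x, qf Q (f x) = qf L x := by
    intro x
    rw [hfx, qf, hpair (G.cob *ᵥ x) (D' *ᵥ (G.cob *ᵥ x)), qf, hL, ← Matrix.mulVec_mulVec,
      ← Matrix.mulVec_mulVec, ← dot_mulVec_left]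
  have hqfN : ∀ y, qf Q (g y) = qf N y := by
    intro y
    rw [hgx, qf_congr Q C y, hNdef]
  have hZC : ∀ y, G.cobᵀ *ᵥ (C *ᵥ y) = 0 := by
    intro y
    have h1 : C *ᵥ y ∈ G.cycleSpace := by
      rw [← hCrange]
      exact ⟨y, rfl⟩
    exact h1
  have hcross : ∀ x y, f x ⬝ᵥ Q *ᵥ g y = 0 := by
    intro x y
    rw [hfx, hgx, hpair (G.cob *ᵥ x) (C *ᵥ y), dot_mulVec_left, hZC, dotProduct_zero]
  have hQswap : ∀ a b : E → ℝ, a ⬝ᵥ Q *ᵥ b = b ⬝ᵥ Q *ᵥ a := by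
    intro a b
    rw [dotProduct_comm, dot_mulVec_left, hQsym]
  have hcross' : ∀ x y, g y ⬝ᵥ Q *ᵥ f x = 0 := by
    intro x y
    rw [hQswap, hcross]
  -- main inequality, positive side
  have hIneq1 : posDim L + posDim N ≤ posDim Q :=
    add_posDim_le Q L N f g hqfL hqfN hcross hcross'
  -- main inequality, negative side
  have hqfL' : ∀ x, qf (-Q) (f x) = qf (-L) x := by
    intro x; rw [qf_neg, qf_neg, hqfL]
  have hqfN' : ∀ y, qf (-Q) (g y) = qf (-N) y := by
    intro y; rw [qf_neg, qf_neg, hqfN]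
  have hcrossn : ∀ x y, f x ⬝ᵥ (-Q) *ᵥ g y = 0 := by
    intro x y; rw [Matrix.neg_mulVec, dotProduct_neg, hcross, neg_zero]
  have hcrossn' : ∀ x y, g y ⬝ᵥ (-Q) *ᵥ f x = 0 := by
    intro x y; rw [Matrix.neg_mulVec, dotProduct_neg, hcross', neg_zero]
  have hIneq2 : posDim (-L) + posDim (-N) ≤ posDim (-Q) :=
    add_posDim_le (-Q) (-L) (-N) f g hqfL' hqfN' hcrossn hcrossn'
  -- counting for Q
  have hnegQ : -Q = Matrix.diagonal (fun e => (Dd e)⁻¹) := by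
    rw [hQdef, Matrix.diagonal_neg]
    congr 1
    funext e
    ring
  have hQcount : posDim Q + posDim (-Q) = Fintype.card E := by
    rw [hQdef, hnegQ, posDim_diagonal, posDim_diagonal]
    have h1 : Fintype.card {e // 0 < -(Dd e)⁻¹} = Fintype.card {e // ¬ 0 < (Dd e)⁻¹} := by
      apply Fintype.card_congr
      apply Equiv.subtypeEquivRight
      intro e
      constructor
      · intro h; intro h2; linarith
      · intro h
        have h3 : (Dd e)⁻¹ ≠ 0 := inv_ne_zero (hDd0 e)
        have := lt_of_le_of_ne (le_of_not_gt h) h3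
        linarith
    rw [h1, Fintype.card_subtype_compl]
    have := Fintype.card_subtype_le (fun e => 0 < (Dd e)⁻¹)
    omega
  -- counting for L
  have hLcount : posDim L + posDim (-L) = L.rank := posDim_add_posDim_neg hLher
  have hLrank : L.rank + 1 = Fintype.card V := by
    have hrn := LinearMap.finrank_range_add_finrank_ker L.mulVecLin
    rw [Module.finrank_pi] at hrn
    have hker1 : Module.finrank ℝ (LinearMap.ker L.mulVecLin) = 1 := by
      rw [hker]
      apply finrank_span_singleton
      obtain ⟨v₀⟩ := hconn.nonempty
      intro h
      have := congrFun h v₀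
      norm_num at this
    rw [hker1] at hrn
    exact hrn
  -- dimension bookkeeping for the coboundary
  have hkerf : LinearMap.ker f = LinearMap.ker G.cob.mulVecLin := by
    ext x
    rw [LinearMap.mem_ker, LinearMap.mem_ker]
    constructor
    · intro h
      have h' : D' *ᵥ (G.cob *ᵥ x) = 0 := by rw [← hfx]; exact h
      have : G.cob *ᵥ x = 0 := by
        funext e
        have he := congrFun h' e
        rw [hD'def, Matrix.mulVec_diagonal, Pi.zero_apply] at he
        rcases mul_eq_zero.1 he with h0 | h0
        · exact absurd h0 (by simpa using hDd0 e)
        · simpa using h0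
      rw [Matrix.mulVecLin_apply, this]
    · intro h
      rw [hfx]
      rw [Matrix.mulVecLin_apply] at h
      rw [h, Matrix.mulVec_zero]
  have hkercob : LinearMap.ker G.cob.mulVecLin = Submodule.span ℝ {(fun _ => 1 : V → ℝ)} :=
    ker_cob G hconn
  have hone' : (fun _ => (1:ℝ)) ≠ (0 : V → ℝ) := by
    obtain ⟨v₀⟩ := hconn.nonempty
    intro h
    have := congrFun h v₀
    norm_num at this
  have hrangef : Module.finrank ℝ (LinearMap.range f) + 1 = Fintype.card V := by
    have hrn := LinearMap.finrank_range_add_finrank_ker f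
    rw [Module.finrank_pi, hkerf, hkercob, finrank_span_singleton hone'] at hrn
    exact hrn
  have hrankcob : G.cob.rank + 1 = Fintype.card V := by
    have hrn := LinearMap.finrank_range_add_finrank_ker G.cob.mulVecLin
    rw [Module.finrank_pi, hkercob, finrank_span_singleton hone'] at hrn
    exact hrn
  have hZrank : Module.finrank ℝ G.cycleSpace + G.cob.rank = Fintype.card E := by
    have hrn := LinearMap.finrank_range_add_finrank_ker (G.cob)ᵀ.mulVecLin
    rw [Module.finrank_pi] at hrn
    have : (G.cob)ᵀ.rank = G.cob.rank := Matrix.rank_transpose G.cob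
    rw [show Module.finrank ℝ (LinearMap.range (G.cob)ᵀ.mulVecLin) = (G.cob)ᵀ.rank from rfl,
      this] at hrn
    rw [OrientedGraph.cycleSpace]
    omega
  have hCrank : Module.finrank ℝ G.cycleSpace = β := by
    have hrn := LinearMap.finrank_range_add_finrank_ker C.mulVecLin
    rw [Module.finrank_pi, Fintype.card_fin, hCker, finrank_bot, add_zero, hCrange] at hrn
    exact hrn
  -- disjointness of the two pieces
  have hdisjW : LinearMap.range f ⊓ G.cycleSpace = ⊥ := by
    rw [Submodule.eq_bot_iff]
    rintro x ⟨⟨θ, rfl⟩, hxZ⟩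
    have hxZ' : G.cobᵀ *ᵥ (f θ) = 0 := hxZ
    have hLθ : L *ᵥ θ = 0 := by
      rw [hL, ← Matrix.mulVec_mulVec, ← Matrix.mulVec_mulVec, ← hfx θ]
      exact hxZ'
    have hθk : θ ∈ LinearMap.ker L.mulVecLin := hLθ
    rw [hker, Submodule.mem_span_singleton] at hθk
    obtain ⟨a, ha⟩ := hθk
    rw [hfx, ← ha, Matrix.mulVec_smul, cob_mulVec_one, smul_zero, Matrix.mulVec_zero]
  -- the two pieces span everything
  have htop : LinearMap.range f ⊔ G.cycleSpace = ⊤ := by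
    apply Submodule.eq_top_of_finrank_eq
    have hsum := Submodule.finrank_sup_add_finrank_inf_eq (LinearMap.range f) G.cycleSpace
    rw [hdisjW, finrank_bot, add_zero] at hsum
    rw [hsum, Module.finrank_pi]
    omega
  -- N has trivial kernel
  have hkerN : LinearMap.ker N.mulVecLin = ⊥ := by
    rw [Submodule.eq_bot_iff]
    intro v hv
    have hv' : N *ᵥ v = 0 := hv
    set z : E → ℝ := Q *ᵥ (C *ᵥ v) with hzdef
    have hz : ∀ u : E → ℝ, u ⬝ᵥ z = 0 := by
      intro u
      have hu : u ∈ LinearMap.range f ⊔ G.cycleSpace := by rw [htop]; trivial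
      obtain ⟨a, ha, b, hb, rfl⟩ := Submodule.mem_sup.1 hu
      obtain ⟨θ, rfl⟩ := ha
      have h1 : f θ ⬝ᵥ z = 0 := by
        rw [hzdef, hfx, hpair (G.cob *ᵥ θ) (C *ᵥ v), dot_mulVec_left, hZC,
          dotProduct_zero]
      have h2 : b ⬝ᵥ z = 0 := by
        rw [← hCrange] at hb
        obtain ⟨w, rfl⟩ := hb
        have : C.mulVecLin w = C *ᵥ w := rfl
        rw [this, hzdef, dot_mulVec_left, Matrix.mulVec_mulVec, Matrix.mulVec_mulVec,
          ← hNdef, hv', dotProduct_zero]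
      rw [add_dotProduct, h1, h2, add_zero]
    have hz0 : z = 0 := by
      have := hz z
      rwa [dotProduct_self_eq_zero] at this
    have hCv : C *ᵥ v = 0 := by
      have : D' *ᵥ z = C *ᵥ v := by
        rw [hzdef, Matrix.mulVec_mulVec, hD'Q, Matrix.one_mulVec]
      rw [← this, hz0, Matrix.mulVec_zero]
    have : v ∈ LinearMap.ker C.mulVecLin := hCv
    rwa [hCker, Submodule.mem_bot] at this
  have hNcount : posDim N + posDim (-N) = β := by
    rw [posDim_add_posDim_neg hNher]
    have hrn := LinearMap.finrank_range_add_finrank_ker N.mulVecLin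
    rw [Module.finrank_pi, Fintype.card_fin, hkerN, finrank_bot, add_zero] at hrn
    exact hrn
  -- identify negEig D with posDim Q
  have hDneg : negEig (Matrix.diagonal Dd) = posDim Q := by
    rw [negEig_eq_posDim_neg hDher]
    have hnegD : -(Matrix.diagonal Dd) = Matrix.diagonal (fun e => -Dd e) :=
      Matrix.diagonal_neg Dd
    rw [hnegD, hQdef, posDim_diagonal, posDim_diagonal]
    apply Fintype.card_congr
    apply Equiv.subtypeEquivRight
    intro e
    have h3 : Dd e ≠ 0 := hDd0 e
    constructor
    · intro h
      have : Dd e < 0 := by linarith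
      have : (Dd e)⁻¹ < 0 := inv_lt_zero.2 this
      linarith
    · intro h
      have : (Dd e)⁻¹ < 0 := by linarith
      have : Dd e < 0 := inv_lt_zero.1 this
      linarith
  -- conclusion
  rw [hNeq, hDneg, posEig_eq_posDim hLher, posEig_eq_posDim hNher]
  omega
end

section
/- Let H be a real symmetric n×n matrix strictly supported on the connected graph G, let λ ∈ ℝ and ψ ∈ ℝ^V satisfy Hψ = λψ with dim ker(H − λI) = 1 and ψ_r ≠ 0 for every vertex r. Then the kernel of the symmetric matrix d^⊤ Φ d (acting on ℝ^V) is one-dimensional and is spanned by the all-ones vector 𝟏. -/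
open Matrix

/-- auxiliary: an edge whose coboundary column at `v` is nonzero is incident to `v`. -/
lemma cob_ne_zero_imp {V E : Type*} [DecidableEq V] (G : OrientedGraph V E) {e : E} {v : V}
    (h : G.cob e v ≠ 0) : G.src e = v ∨ G.tgt e = v := by
  by_contra hc
  push_neg at hc
  simp [OrientedGraph.cob, hc.1, hc.2] at h

/-- Key identity: `dᵀ Φ d = Dψ (H − λ·1) Dψ`. -/
lemma key_identity {V E : Type*} [Fintype V] [Fintype E] [DecidableEq V] [DecidableEq E]
    (G : OrientedGraph V E)
    (H : Matrix V V ℝ) (hsymm : H.IsSymm) (hsupp : G.StrictSupport H)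
    (lam : ℝ) (ψ : V → ℝ) (heig : H.mulVec ψ = lam • ψ) :
    (G.cob)ᵀ * PhiMat G H ψ * G.cob =
      Matrix.diagonal ψ * (H - lam • (1 : Matrix V V ℝ)) * Matrix.diagonal ψ := by
  have hsym : ∀ a b, H a b = H b a := fun a b => hsymm.apply b a
  ext r s
  have lhs_eq : ((G.cob)ᵀ * PhiMat G H ψ * G.cob) r s =
      ∑ e : E, G.cob e r *
        (-(ψ (G.src e) * H (G.src e) (G.tgt e) * ψ (G.tgt e))) * G.cob e s := by
    rw [Matrix.mul_assoc, Matrix.mul_apply]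
    refine Finset.sum_congr rfl fun e _ => ?_
    simp only [PhiMat, Matrix.diagonal_mul, Matrix.transpose_apply]
    ring
  have rhs_eq : (Matrix.diagonal ψ * (H - lam • (1 : Matrix V V ℝ)) * Matrix.diagonal ψ) r s =
      ψ r * ((H - lam • (1 : Matrix V V ℝ)) r s) * ψ s := by
    simp [Matrix.mul_diagonal, Matrix.diagonal_mul, mul_comm]
  rw [lhs_eq, rhs_eq]
  by_cases hrs : r = s
  · -- diagonal case
    subst hrs
    -- the "neighbour sum" τ
    set τ : E → ℝ := fun e =>
      if G.src e = r then H r (G.tgt e) * ψ (G.tgt e)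
      else if G.tgt e = r then H r (G.src e) * ψ (G.src e) else 0 with hτ
    have hterm : ∀ e : E, G.cob e r *
        (-(ψ (G.src e) * H (G.src e) (G.tgt e) * ψ (G.tgt e))) * G.cob e r
        = ψ r * (-(τ e)) := by
      intro e
      by_cases h1 : G.src e = r
      · have h2 : G.tgt e ≠ r := fun h => G.loopless e (h1.trans h.symm)
        have cr : G.cob e r = -1 := by simp [OrientedGraph.cob, h1, h2]
        rw [cr]
        simp only [hτ, if_pos h1]
        rw [← h1]
        ring
      · by_cases h2 : G.tgt e = r
        · have cr : G.cob e r = 1 := by simp [OrientedGraph.cob, h1, h2]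
          rw [cr]
          simp only [hτ, if_neg h1, if_pos h2]
          rw [hsym r (G.src e), ← h2]
          ring
        · simp [hτ, OrientedGraph.cob, h1, h2]
    -- indicator expansion of τ
    have hτ_sum : ∀ e : E, τ e = ∑ v : V,
        (if (G.src e = r ∧ G.tgt e = v) ∨ (G.src e = v ∧ G.tgt e = r)
          then H r v * ψ v else 0) := by
      intro e
      by_cases h1 : G.src e = r
      · have h2 : G.tgt e ≠ r := fun h => G.loopless e (h1.trans h.symm)
        rw [Finset.sum_eq_single (G.tgt e)]
        · simp [hτ, h1]
        · intro v _ hv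
          have : ¬((G.src e = r ∧ G.tgt e = v) ∨ (G.src e = v ∧ G.tgt e = r)) := by
            rintro (⟨-, h⟩ | ⟨h, h'⟩)
            · exact hv h.symm
            · exact h2 h'
          simp [this]
        · simp
      · by_cases h2 : G.tgt e = r
        · rw [Finset.sum_eq_single (G.src e)]
          · simp [hτ, h1, h2]
          · intro v _ hv
            have : ¬((G.src e = r ∧ G.tgt e = v) ∨ (G.src e = v ∧ G.tgt e = r)) := by
              rintro (⟨h, -⟩ | ⟨h, -⟩)
              · exact h1 h
              · exact hv h.symm
            simp [this]
          · simp
        · have : ∀ v : V,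
              ¬((G.src e = r ∧ G.tgt e = v) ∨ (G.src e = v ∧ G.tgt e = r)) := by
            rintro v (⟨h, -⟩ | ⟨-, h⟩)
            · exact h1 h
            · exact h2 h
          simp [hτ, h1, h2, this]
    -- sum of τ equals the eigenvalue relation sum
    have hinner : ∀ v : V, (∑ e : E,
        (if (G.src e = r ∧ G.tgt e = v) ∨ (G.src e = v ∧ G.tgt e = r)
          then H r v * ψ v else 0)) = if v = r then 0 else H r v * ψ v := by
      intro v
      by_cases hvr : v = r
      · subst hvr
        have h' : ∀ e : E, ¬(G.src e = v ∧ G.tgt e = v) := by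
          rintro e ⟨h, h'⟩; exact G.loopless e (h.trans h'.symm)
        simp [h']
      · rw [if_neg hvr]
        by_cases hH : H r v = 0
        · simp [hH]
        · have hadj : G.toSimpleGraph.Adj r v :=
            (hsupp r v (fun h => hvr (h.symm))).mp hH
          obtain ⟨e0, he0⟩ := hadj
          rw [Finset.sum_eq_single e0]
          · have : (G.src e0 = r ∧ G.tgt e0 = v) ∨ (G.src e0 = v ∧ G.tgt e0 = r) := he0
            simp [this]
          · intro e _ hne
            have : ¬((G.src e = r ∧ G.tgt e = v) ∨ (G.src e = v ∧ G.tgt e = r)) := by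
              intro hcond
              apply hne
              apply G.edgeInj e e0
              rcases hcond with ⟨a1, a2⟩ | ⟨a1, a2⟩ <;> rcases he0 with ⟨b1, b2⟩ | ⟨b1, b2⟩
              · exact Or.inl ⟨a1.trans b1.symm, a2.trans b2.symm⟩
              · exact Or.inr ⟨a1.trans b2.symm, a2.trans b1.symm⟩
              · exact Or.inr ⟨a1.trans b2.symm, a2.trans b1.symm⟩
              · exact Or.inl ⟨a1.trans b1.symm, a2.trans b2.symm⟩
            simp [this]
          · simp
    have hτ_total : ∑ e : E, τ e = lam * ψ r - H r r * ψ r := by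
      calc ∑ e : E, τ e
          = ∑ e : E, ∑ v : V, (if (G.src e = r ∧ G.tgt e = v) ∨ (G.src e = v ∧ G.tgt e = r)
              then H r v * ψ v else 0) := Finset.sum_congr rfl (fun e _ => hτ_sum e)
        _ = ∑ v : V, ∑ e : E, (if (G.src e = r ∧ G.tgt e = v) ∨ (G.src e = v ∧ G.tgt e = r)
              then H r v * ψ v else 0) := Finset.sum_comm
        _ = ∑ v : V, (if v = r then 0 else H r v * ψ v) :=
            Finset.sum_congr rfl (fun v _ => hinner v)
        _ = (∑ v : V, H r v * ψ v) - H r r * ψ r := by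
            have hsplit : ∀ v : V, (if v = r then 0 else H r v * ψ v)
                = H r v * ψ v - (if v = r then H r v * ψ v else 0) := by
              intro v; by_cases h : v = r <;> simp [h]
            rw [Finset.sum_congr rfl (fun v _ => hsplit v), Finset.sum_sub_distrib,
              Finset.sum_ite_eq' Finset.univ r (fun v => H r v * ψ v)]
            simp
        _ = lam * ψ r - H r r * ψ r := by
            have := congrFun heig r
            simp only [Matrix.mulVec, dotProduct, Pi.smul_apply, smul_eq_mul] at this
            rw [this]
    rw [Finset.sum_congr rfl (fun e _ => hterm e), ← Finset.mul_sum,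
      Finset.sum_neg_distrib, hτ_total]
    simp only [Matrix.sub_apply, Matrix.smul_apply, Matrix.one_apply_eq, if_true,
      smul_eq_mul, mul_one]
    ring
  · -- off-diagonal case
    have hRHS : ψ r * ((H - lam • (1 : Matrix V V ℝ)) r s) * ψ s = ψ r * H r s * ψ s := by
      simp [Matrix.sub_apply, Matrix.smul_apply, Matrix.one_apply, hrs]
    rw [hRHS]
    by_cases hadj : G.toSimpleGraph.Adj r s
    · obtain ⟨e0, he0⟩ := hadj
      rw [Finset.sum_eq_single e0]
      · rcases he0 with ⟨h1, h2⟩ | ⟨h1, h2⟩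
        · have ht : G.tgt e0 ≠ r := by rw [h2]; exact fun h => hrs h.symm
          have hs' : G.src e0 ≠ s := by rw [h1]; exact hrs
          have cr : G.cob e0 r = -1 := by simp [OrientedGraph.cob, h1, ht]
          have cs : G.cob e0 s = 1 := by simp [OrientedGraph.cob, h2, hs']
          rw [cr, cs, h1, h2]
          ring
        · have ht : G.tgt e0 ≠ s := by rw [h2]; exact hrs
          have hs' : G.src e0 ≠ r := by rw [h1]; exact fun h => hrs h.symm
          have cr : G.cob e0 r = 1 := by simp [OrientedGraph.cob, h2, hs']
          have cs : G.cob e0 s = -1 := by simp [OrientedGraph.cob, h1, ht]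
          rw [cr, cs, h1, h2, hsym s r]
          ring
      · intro e _ hne
        by_cases hcr : G.cob e r = 0
        · rw [hcr]; ring
        by_cases hcs : G.cob e s = 0
        · rw [hcs]; ring
        exfalso
        apply hne
        apply G.edgeInj e e0
        have ir := cob_ne_zero_imp G hcr
        have is := cob_ne_zero_imp G hcs
        have hcond : (G.src e = r ∧ G.tgt e = s) ∨ (G.src e = s ∧ G.tgt e = r) := by
          rcases ir with h1 | h1 <;> rcases is with h2 | h2
          · exact absurd (h1.symm.trans h2) hrs
          · exact Or.inl ⟨h1, h2⟩
          · exact Or.inr ⟨h2, h1⟩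
          · exact absurd (h1.symm.trans h2) hrs
        rcases hcond with ⟨a1, a2⟩ | ⟨a1, a2⟩ <;> rcases he0 with ⟨b1, b2⟩ | ⟨b1, b2⟩
        · exact Or.inl ⟨a1.trans b1.symm, a2.trans b2.symm⟩
        · exact Or.inr ⟨a1.trans b2.symm, a2.trans b1.symm⟩
        · exact Or.inr ⟨a1.trans b2.symm, a2.trans b1.symm⟩
        · exact Or.inl ⟨a1.trans b1.symm, a2.trans b2.symm⟩
      · simp
    · have hH : H r s = 0 := by
        by_contra h
        exact hadj ((hsupp r s hrs).mp h)
      have : ∀ e : E, G.cob e r *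
          (-(ψ (G.src e) * H (G.src e) (G.tgt e) * ψ (G.tgt e))) * G.cob e s = 0 := by
        intro e
        by_cases hcr : G.cob e r = 0
        · rw [hcr]; ring
        by_cases hcs : G.cob e s = 0
        · rw [hcs]; ring
        exfalso
        apply hadj
        have ir := cob_ne_zero_imp G hcr
        have is := cob_ne_zero_imp G hcs
        refine ⟨e, ?_⟩
        rcases ir with h1 | h1 <;> rcases is with h2 | h2
        · exact absurd (h1.symm.trans h2) hrs
        · exact Or.inl ⟨h1, h2⟩
        · exact Or.inr ⟨h2, h1⟩
        · exact absurd (h1.symm.trans h2) hrs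
      rw [Finset.sum_congr rfl (fun e _ => this e), Finset.sum_const, hH]
      simp

/-- the kernel of `dᵀ Φ d` is one-dimensional, spanned by the all-ones
vector. -/
theorem kernel_of_dT_Phi_d
    {V E : Type*} [Fintype V] [Fintype E] [DecidableEq V] [DecidableEq E]
    (G : OrientedGraph V E) (hconn : G.toSimpleGraph.Connected)
    (H : Matrix V V ℝ) (hsymm : H.IsSymm) (hsupp : G.StrictSupport H)
    (lam : ℝ) (ψ : V → ℝ) (heig : H.mulVec ψ = lam • ψ)
    (hker : Module.finrank ℝ (LinearMap.ker (H - lam • (1 : Matrix V V ℝ)).mulVecLin) = 1)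
    (hψ : ∀ r, ψ r ≠ 0) :
    LinearMap.ker ((G.cob)ᵀ * PhiMat G H ψ * G.cob).mulVecLin =
      Submodule.span ℝ {(fun _ => 1 : V → ℝ)} ∧
    Module.finrank ℝ
      (LinearMap.ker ((G.cob)ᵀ * PhiMat G H ψ * G.cob).mulVecLin) = 1 := by
  have hVne : Nonempty V := by
    by_contra h
    have h0 : Fintype.card V = 0 := by
      simp [Fintype.card_eq_zero_iff.mpr (not_nonempty_iff.mp h)]
    have hle := Submodule.finrank_le (LinearMap.ker (H - lam • (1 : Matrix V V ℝ)).mulVecLin)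
    rw [Module.finrank_fintype_fun_eq_card, h0, hker] at hle
    omega
  obtain ⟨r0⟩ := hVne
  have hψ0 : ψ ≠ 0 := fun h => hψ r0 (congrFun h r0)
  -- ψ lies in ker(H - λ)
  have hψker : ψ ∈ LinearMap.ker (H - lam • (1 : Matrix V V ℝ)).mulVecLin := by
    rw [LinearMap.mem_ker, Matrix.mulVecLin_apply, Matrix.sub_mulVec,
      Matrix.smul_mulVec, Matrix.one_mulVec, heig, sub_self]
  have hspan : LinearMap.ker (H - lam • (1 : Matrix V V ℝ)).mulVecLin
      = Submodule.span ℝ {ψ} := by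
    refine (Submodule.eq_of_le_of_finrank_eq ?_ ?_).symm
    · rw [Submodule.span_le, Set.singleton_subset_iff]; exact hψker
    · rw [finrank_span_singleton hψ0, hker]
  have hkey := key_identity G H hsymm hsupp lam ψ heig
  -- characterize the kernel
  have hset : LinearMap.ker ((G.cob)ᵀ * PhiMat G H ψ * G.cob).mulVecLin =
      Submodule.span ℝ {(fun _ => 1 : V → ℝ)} := by
    ext x
    rw [LinearMap.mem_ker, Matrix.mulVecLin_apply, hkey, Submodule.mem_span_singleton]
    constructor
    · intro hx
      have hx' : (Matrix.diagonal ψ).mulVec ((H - lam • (1 : Matrix V V ℝ)).mulVec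
          ((Matrix.diagonal ψ).mulVec x)) = 0 := by
        rw [← Matrix.mulVec_mulVec, ← Matrix.mulVec_mulVec] at hx
        exact hx
      have hmid : (H - lam • (1 : Matrix V V ℝ)).mulVec
          ((Matrix.diagonal ψ).mulVec x) = 0 := by
        funext v
        have := congrFun hx' v
        rw [Matrix.mulVec_diagonal] at this
        exact (mul_eq_zero.mp this).resolve_left (hψ v)
      have hmem : (Matrix.diagonal ψ).mulVec x ∈
          LinearMap.ker (H - lam • (1 : Matrix V V ℝ)).mulVecLin := by
        rw [LinearMap.mem_ker, Matrix.mulVecLin_apply]; exact hmid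
      rw [hspan, Submodule.mem_span_singleton] at hmem
      obtain ⟨c, hc⟩ := hmem
      refine ⟨c, ?_⟩
      funext v
      have h1 := congrFun hc v
      rw [Matrix.mulVec_diagonal] at h1
      simp only [Pi.smul_apply, smul_eq_mul] at h1
      have h2 : ψ v * x v = ψ v * c := by rw [← h1]; ring
      simp only [Pi.smul_apply, smul_eq_mul, mul_one]
      exact (mul_left_cancel₀ (hψ v) h2).symm
    · rintro ⟨c, rfl⟩
      have hDx : (Matrix.diagonal ψ).mulVec (c • (fun _ => 1 : V → ℝ)) = c • ψ := by
        funext v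
        rw [Matrix.mulVec_diagonal]
        simp [mul_comm]
      rw [← Matrix.mulVec_mulVec, ← Matrix.mulVec_mulVec, hDx]
      have : (H - lam • (1 : Matrix V V ℝ)).mulVec (c • ψ) = 0 := by
        rw [Matrix.mulVec_smul]
        rw [LinearMap.mem_ker, Matrix.mulVecLin_apply] at hψker
        rw [hψker, smul_zero]
      rw [this, Matrix.mulVec_zero]
  refine ⟨hset, ?_⟩
  rw [hset, finrank_span_singleton]
  intro h
  exact one_ne_zero (congrFun h r0)
end
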